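/- arXiv:2104.06714 — 4 statements merged into one kernel-verified Lean document; each statement's English description precedes it below -/
import Mathlib

section
/- For every fixed real β ≥ 0 there exist constants c₁, c₂ > 0 (depending only on β) such that for all integers k ≥ 2 and all integers u with u ≥ √(2k), the random variable X ~ pow(β,u) satisfies: (i) if β < 1, then c₁·(√k/u)^{1−β} ≤ Pr[⌈√k⌉ ≤ X ≤ ⌊√(2k)⌋] ≤ c₂·(√k/u)^{1−β}; (ii) if β = 1, then c₁/ln(u) ≤ Pr[⌈√k⌉ ≤ X ≤ ⌊√(2k)⌋] ≤ c₂/ln(u); (iii) if β > 1, then c₁·k^{(1−β)/2} ≤ Pr[⌈√k⌉ ≤ X ≤ ⌊√(2k)⌋] ≤ c₂·k^{(1−β)/2}. -/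
open Finset

/-- The probability that `X ~ pow(β,u)` lies in the integer interval
`[⌈√k⌉ .. ⌊√(2k)⌋]`, namely `C_{β,u} · ∑_{i=⌈√k⌉}^{⌊√(2k)⌋} i^(-β)`. -/
noncomputable def powLawProbSqrtRange (β : ℝ) (u k : ℕ) : ℝ :=
  (∑ j ∈ Finset.Icc 1 u, (j : ℝ) ^ (-β))⁻¹ *
    ∑ i ∈ Finset.Icc ⌈Real.sqrt k⌉₊ ⌊Real.sqrt (2 * k)⌋₊, (i : ℝ) ^ (-β)

private lemma inv_anti' {a b : ℝ} (ha : 0 < a) (h : a ≤ b) : b⁻¹ ≤ a⁻¹ :=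
  inv_anti₀ ha h

private lemma ceil_sqrt_le_sqrt_two_mul (k : ℕ) (hk : 2 ≤ k) :
    (⌈Real.sqrt k⌉₊ : ℝ) ≤ Real.sqrt (2 * k) := by
  have hnat : (⌈Real.sqrt k⌉₊) ^ 2 ≤ 2 * k := by
    set s := Nat.sqrt k with hs
    have hceil : ⌈Real.sqrt k⌉₊ ≤ s + 1 := by
      apply Nat.ceil_le.mpr
      have := Real.real_sqrt_le_nat_sqrt_succ (a := k)
      push_cast
      exact this
    rcases eq_or_ne (s * s) k with h | h
    · have hsq : Real.sqrt k = s := by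
        rw [show ((k:ℕ):ℝ) = (s:ℝ) * (s:ℝ) by exact_mod_cast congrArg (Nat.cast (R := ℝ)) h.symm]
        exact Real.sqrt_mul_self (by positivity)
      have : ⌈Real.sqrt k⌉₊ = s := by rw [hsq]; exact Nat.ceil_natCast s
      rw [this]
      nlinarith [Nat.sqrt_le k]
    · have h1 : s * s + 1 ≤ k := Nat.succ_le_of_lt (lt_of_le_of_ne (Nat.sqrt_le k) h)
      have h2s : 2 * s ≤ k := by
        rcases le_or_gt s 1 with hs1 | hs1
        · omega
        · have : 2 * s ≤ s * s := by nlinarith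
          omega
      calc (⌈Real.sqrt k⌉₊)^2 ≤ (s+1)^2 := Nat.pow_le_pow_left hceil 2
        _ = s*s + 2*s + 1 := by ring
        _ ≤ 2 * k := by omega
  rw [Real.le_sqrt (by positivity) (by positivity)]
  calc (⌈Real.sqrt k⌉₊ : ℝ)^2 = ((⌈Real.sqrt k⌉₊ ^ 2 : ℕ) : ℝ) := by push_cast; ring
    _ ≤ ((2 * k : ℕ) : ℝ) := by exact_mod_cast hnat
    _ = 2 * k := by push_cast; ring

private lemma sum_tail_le_integral (β : ℝ) (hβ : 0 ≤ β) (u : ℕ) (hu : 1 ≤ u) :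
    ∑ j ∈ Finset.Icc 2 u, (j : ℝ) ^ (-β) ≤ ∫ x in (1:ℕ)..(u:ℕ), (x:ℝ) ^ (-β) := by
  have hanti : AntitoneOn (fun x : ℝ => x ^ (-β)) (Set.Icc (1:ℕ) (u:ℕ)) := by
    intro x hx y hy hxy
    exact Real.rpow_le_rpow_of_nonpos (lt_of_lt_of_le one_pos (by exact_mod_cast hx.1)) hxy
      (neg_nonpos.mpr hβ)
  have h := AntitoneOn.sum_le_integral_Ico (f := fun x : ℝ => x ^ (-β)) hu hanti
  refine le_trans (le_of_eq ?_) h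
  rw [show Finset.Icc 2 u = Finset.Ico 2 (u+1) by rw [Finset.Ico_add_one_right_eq_Icc]]
  rw [Finset.sum_Ico_eq_sum_range, Finset.sum_Ico_eq_sum_range]
  simp only [Nat.add_sub_cancel, show u + 1 - 2 = u - 1 by omega]
  apply Finset.sum_congr rfl
  intro i _
  norm_num
  ring_nf

private lemma den_split (β : ℝ) (u : ℕ) (hu : 1 ≤ u) :
    ∑ j ∈ Finset.Icc 1 u, (j : ℝ) ^ (-β) = 1 + ∑ j ∈ Finset.Icc 2 u, (j : ℝ) ^ (-β) := by
  have h1 : (1:ℕ) ∈ Finset.Icc 1 u := by simp [hu]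
  rw [← Finset.add_sum_erase _ _ h1, Finset.Icc_erase_left, ← Finset.Icc_add_one_left_eq_Ioc]
  norm_num

private lemma integral_val (β : ℝ) (u : ℕ) (hu : 1 ≤ u) (hβ1 : β ≠ 1) :
    ∫ x in (1:ℕ)..(u:ℕ), (x:ℝ) ^ (-β) = ((u:ℝ) ^ (1 - β) - 1) / (1 - β) := by
  push_cast
  rw [integral_rpow]
  · norm_num [show (-β) + 1 = 1 - β by ring]
  · rcases lt_or_ge β 1 with h | h
    · left; linarith
    · right
      refine ⟨by intro hc; apply hβ1; linarith [neg_injective hc], ?_⟩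
      rw [Set.uIcc_of_le (by exact_mod_cast hu : (1:ℝ) ≤ (u:ℝ))]
      intro hc
      exact absurd hc.1 (by norm_num)

private lemma den_ge_one (β : ℝ) (u : ℕ) (hu : 1 ≤ u) :
    1 ≤ ∑ j ∈ Finset.Icc 1 u, (j : ℝ) ^ (-β) := by
  have h1 : (1:ℕ) ∈ Finset.Icc 1 u := by simp [hu]
  calc (1:ℝ) = ((1:ℕ):ℝ) ^ (-β) := by norm_num
    _ ≤ _ := Finset.single_le_sum (f := fun j : ℕ => (j:ℝ) ^ (-β))
        (fun i _ => Real.rpow_nonneg (Nat.cast_nonneg i) _) h1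

private lemma den_lower_lt (β : ℝ) (hβ : 0 ≤ β) (u : ℕ) (hu : 1 ≤ u) :
    (u:ℝ) ^ (1 - β) ≤ ∑ j ∈ Finset.Icc 1 u, (j : ℝ) ^ (-β) := by
  have hupos : (0:ℝ) < u := by exact_mod_cast hu
  have hterm : ∀ j ∈ Finset.Icc 1 u, (u:ℝ) ^ (-β) ≤ (j:ℝ) ^ (-β) := by
    intro j hj
    rw [Finset.mem_Icc] at hj
    refine Real.rpow_le_rpow_of_nonpos ?_ (by exact_mod_cast hj.2) (neg_nonpos.mpr hβ)
    exact_mod_cast Nat.lt_of_lt_of_le Nat.zero_lt_one hj.1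
  have h := Finset.card_nsmul_le_sum (Finset.Icc 1 u) (fun j : ℕ => (j:ℝ) ^ (-β))
      ((u:ℝ) ^ (-β)) hterm
  rw [Nat.card_Icc] at h
  simp only [Nat.add_sub_cancel, nsmul_eq_mul] at h
  calc (u:ℝ) ^ (1-β) = (u:ℝ) ^ ((1:ℝ) + (-β)) := by ring_nf
    _ = (u:ℝ) ^ (1:ℝ) * (u:ℝ) ^ (-β) := Real.rpow_add hupos 1 (-β)
    _ = (u:ℝ) * (u:ℝ) ^ (-β) := by rw [Real.rpow_one]
    _ ≤ _ := h

private lemma den_harmonic (u : ℕ) :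
    ∑ j ∈ Finset.Icc 1 u, (j : ℝ) ^ (-(1:ℝ)) = ((harmonic u : ℚ) : ℝ) := by
  rw [harmonic_eq_sum_Icc]
  push_cast
  exact Finset.sum_congr rfl fun j _ => Real.rpow_neg_one _

private lemma sqrt_pow_eq (β : ℝ) (k : ℕ) :
    Real.sqrt k ^ (1 - β) = (k:ℝ) ^ ((1 - β)/2) := by
  rw [Real.sqrt_eq_rpow, ← Real.rpow_mul (Nat.cast_nonneg k)]
  congr 1
  ring

private lemma num_bounds (β : ℝ) (hβ : 0 ≤ β) (k : ℕ) (hk : 2 ≤ k) :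
    (Real.sqrt 2) ^ (-β) / 5 * (Real.sqrt k) ^ (1 - β) ≤
      (∑ i ∈ Finset.Icc ⌈Real.sqrt k⌉₊ ⌊Real.sqrt (2 * k)⌋₊, (i : ℝ) ^ (-β)) ∧
    (∑ i ∈ Finset.Icc ⌈Real.sqrt k⌉₊ ⌊Real.sqrt (2 * k)⌋₊, (i : ℝ) ^ (-β)) ≤
      2 * (Real.sqrt k) ^ (1 - β) := by
  set A := ⌈Real.sqrt k⌉₊ with hA
  set B := ⌊Real.sqrt (2 * k)⌋₊ with hB
  have hk1 : (1:ℝ) ≤ (k:ℝ) := by exact_mod_cast Nat.one_le_of_lt hk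
  have hsk1 : (1:ℝ) ≤ Real.sqrt k := by
    rw [show (1:ℝ) = Real.sqrt 1 from (Real.sqrt_one).symm]
    exact Real.sqrt_le_sqrt hk1
  have hskpos : (0:ℝ) < Real.sqrt k := lt_of_lt_of_le one_pos hsk1
  have h2k : Real.sqrt (2 * (k:ℝ)) = Real.sqrt 2 * Real.sqrt k := Real.sqrt_mul (by norm_num) _
  have hs2lo : (7:ℝ)/5 ≤ Real.sqrt 2 := by
    rw [show (7:ℝ)/5 = Real.sqrt ((7/5)^2) from (Real.sqrt_sq (by norm_num)).symm]
    exact Real.sqrt_le_sqrt (by norm_num)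
  have hs2hi : Real.sqrt 2 ≤ 2 := by
    nlinarith [Real.sq_sqrt (by norm_num : (0:ℝ) ≤ 2), Real.sqrt_nonneg 2]
  have hA1 : Real.sqrt k ≤ (A:ℝ) := Nat.le_ceil _
  have hA2 : (A:ℝ) ≤ Real.sqrt (2 * k) := ceil_sqrt_le_sqrt_two_mul k hk
  have hA3 : (A:ℝ) < Real.sqrt k + 1 := Nat.ceil_lt_add_one (Real.sqrt_nonneg _)
  have hB1 : (B:ℝ) ≤ Real.sqrt (2 * k) := Nat.floor_le (Real.sqrt_nonneg _)
  have hB2 : Real.sqrt (2 * k) < (B:ℝ) + 1 := Nat.lt_floor_add_one _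
  have hAB : A ≤ B := Nat.le_floor hA2
  have hcard : ((Finset.Icc A B).card : ℝ) = (B:ℝ) + 1 - (A:ℝ) := by
    rw [Nat.card_Icc]
    push_cast [Nat.succ_sub hAB, Nat.cast_sub hAB]
    ring
  set c : ℝ := ((Finset.Icc A B).card : ℝ) with hc
  have hc1 : (1:ℝ) ≤ c := by
    have h : 1 ≤ (Finset.Icc A B).card :=
      Finset.card_pos.mpr ⟨A, Finset.mem_Icc.mpr ⟨le_refl _, hAB⟩⟩
    rw [hc]; exact_mod_cast h
  have hc_lo : Real.sqrt k / 5 ≤ c := by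
    have h2 : Real.sqrt 2 * Real.sqrt k - Real.sqrt k - 1 < c := by
      rw [hcard] at *
      nlinarith [h2k]
    rcases le_or_gt (Real.sqrt k) 5 with h | h
    · linarith
    · nlinarith
  have hc_hi : c ≤ 2 * Real.sqrt k := by
    rw [hcard]
    nlinarith [h2k]
  have hterm_lo : ∀ i ∈ Finset.Icc A B,
      (Real.sqrt 2 * Real.sqrt k) ^ (-β) ≤ (i:ℝ) ^ (-β) := by
    intro i hi
    rw [Finset.mem_Icc] at hi
    have hiA : (A:ℝ) ≤ (i:ℝ) := by exact_mod_cast hi.1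
    have hiB : (i:ℝ) ≤ (B:ℝ) := by exact_mod_cast hi.2
    refine Real.rpow_le_rpow_of_nonpos (by linarith) (by rw [← h2k]; push_cast; linarith)
      (neg_nonpos.mpr hβ)
  have hterm_hi : ∀ i ∈ Finset.Icc A B, (i:ℝ) ^ (-β) ≤ (Real.sqrt k) ^ (-β) := by
    intro i hi
    rw [Finset.mem_Icc] at hi
    have hiA : (A:ℝ) ≤ (i:ℝ) := by exact_mod_cast hi.1
    exact Real.rpow_le_rpow_of_nonpos hskpos (by linarith) (neg_nonpos.mpr hβ)
  have hsum_lo := Finset.card_nsmul_le_sum (Finset.Icc A B) (fun i : ℕ => (i:ℝ) ^ (-β)) _ hterm_lo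
  have hsum_hi := Finset.sum_le_card_nsmul (Finset.Icc A B) (fun i : ℕ => (i:ℝ) ^ (-β)) _ hterm_hi
  rw [nsmul_eq_mul] at hsum_lo hsum_hi
  rw [← hc] at hsum_lo hsum_hi
  have hpow : Real.sqrt k * (Real.sqrt k) ^ (-β) = (Real.sqrt k) ^ (1 - β) := by
    rw [show (1:ℝ) - β = 1 + (-β) by ring, Real.rpow_add hskpos, Real.rpow_one]
  have hmulpow : (Real.sqrt 2 * Real.sqrt k) ^ (-β)
      = (Real.sqrt 2) ^ (-β) * (Real.sqrt k) ^ (-β) :=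
    Real.mul_rpow (Real.sqrt_nonneg _) (Real.sqrt_nonneg _)
  constructor
  · refine le_trans ?_ hsum_lo
    have h1 : (0:ℝ) ≤ (Real.sqrt 2) ^ (-β) * (Real.sqrt k) ^ (-β) := by positivity
    calc (Real.sqrt 2) ^ (-β) / 5 * (Real.sqrt k) ^ (1-β)
        = (Real.sqrt k / 5) * ((Real.sqrt 2) ^ (-β) * (Real.sqrt k) ^ (-β)) := by
          rw [← hpow]; ring
      _ ≤ c * ((Real.sqrt 2) ^ (-β) * (Real.sqrt k) ^ (-β)) := by nlinarith [hc_lo]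
      _ = c * (Real.sqrt 2 * Real.sqrt k) ^ (-β) := by rw [hmulpow]
  · refine le_trans hsum_hi ?_
    have h1 : (0:ℝ) ≤ (Real.sqrt k) ^ (-β) := by positivity
    calc c * (Real.sqrt k) ^ (-β) ≤ 2 * Real.sqrt k * (Real.sqrt k) ^ (-β) := by nlinarith
      _ = 2 * (Real.sqrt k) ^ (1-β) := by rw [← hpow]; ring

/-- For every fixed `β ≥ 0` there exist constants `c₁, c₂ > 0`
(depending only on `β`) such that for all integers `k ≥ 2` and all integers `u`
with `u ≥ √(2k)`, the random variable `X ~ pow(β,u)` satisfies the stated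
two-sided bounds on `Pr[⌈√k⌉ ≤ X ≤ ⌊√(2k)⌋]` in each of the three cases. -/
theorem powLaw_prob_sqrt_range_asymptotics (β : ℝ) (hβ : 0 ≤ β) :
    ∃ c₁ c₂ : ℝ, 0 < c₁ ∧ 0 < c₂ ∧ ∀ k u : ℕ, 2 ≤ k → Real.sqrt (2 * k) ≤ (u : ℝ) →
      (β < 1 →
        c₁ * (Real.sqrt k / u) ^ (1 - β) ≤ powLawProbSqrtRange β u k ∧
          powLawProbSqrtRange β u k ≤ c₂ * (Real.sqrt k / u) ^ (1 - β)) ∧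
      (β = 1 →
        c₁ / Real.log u ≤ powLawProbSqrtRange β u k ∧
          powLawProbSqrtRange β u k ≤ c₂ / Real.log u) ∧
      (1 < β →
        c₁ * (k : ℝ) ^ ((1 - β) / 2) ≤ powLawProbSqrtRange β u k ∧
          powLawProbSqrtRange β u k ≤ c₂ * (k : ℝ) ^ ((1 - β) / 2)) := by
  rcases lt_trichotomy β 1 with hlt | heq | hgt
  · -- case β < 1
    have h1β : (0:ℝ) < 1 - β := by linarith
    have hdpos : (0:ℝ) < 1 + 1/(1-β) := by positivity
    refine ⟨(Real.sqrt 2) ^ (-β) / 5 / (1 + 1/(1-β)), 2,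
      by positivity, by norm_num, ?_⟩
    intro k u hk hu
    have hk2 : (2:ℝ) ≤ (k:ℝ) := by exact_mod_cast hk
    have hu2 : (2:ℝ) ≤ (u:ℝ) := by
      have h4 : Real.sqrt 4 = 2 := by
        rw [show (4:ℝ) = 2^2 by norm_num]
        exact Real.sqrt_sq (by norm_num)
      calc (2:ℝ) = Real.sqrt 4 := h4.symm
        _ ≤ Real.sqrt (2 * k) := Real.sqrt_le_sqrt (by nlinarith)
        _ ≤ (u:ℝ) := hu
    have hu1 : 1 ≤ u := by exact_mod_cast le_trans (by norm_num : (1:ℝ) ≤ 2) hu2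
    have hupos : (0:ℝ) < u := by linarith
    obtain ⟨hNlo, hNhi⟩ := num_bounds β hβ k hk
    have hNpos : (0:ℝ) ≤ ∑ i ∈ Finset.Icc ⌈Real.sqrt k⌉₊ ⌊Real.sqrt (2 * k)⌋₊, (i : ℝ) ^ (-β) :=
      Finset.sum_nonneg fun i _ => Real.rpow_nonneg (Nat.cast_nonneg i) _
    have hUpos : (0:ℝ) < (u:ℝ) ^ (1-β) := Real.rpow_pos_of_pos hupos _
    have hU1 : (1:ℝ) ≤ (u:ℝ) ^ (1-β) := by
      have h := Real.rpow_le_rpow_of_exponent_le (by linarith : (1:ℝ) ≤ (u:ℝ))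
        (by linarith : (0:ℝ) ≤ 1 - β)
      rwa [Real.rpow_zero] at h
    have hDlo : (u:ℝ) ^ (1-β) ≤ ∑ j ∈ Finset.Icc 1 u, (j : ℝ) ^ (-β) :=
      den_lower_lt β hβ u hu1
    have hDpos : (0:ℝ) < ∑ j ∈ Finset.Icc 1 u, (j : ℝ) ^ (-β) := lt_of_lt_of_le hUpos hDlo
    have hDhi : ∑ j ∈ Finset.Icc 1 u, (j : ℝ) ^ (-β) ≤ (1 + 1/(1-β)) * (u:ℝ) ^ (1-β) := by
      have h1 := den_split β u hu1
      have h2 := le_trans (sum_tail_le_integral β hβ u hu1)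
        (le_of_eq (integral_val β u hu1 (ne_of_lt hlt)))
      rw [div_eq_mul_inv] at h2
      rw [div_eq_mul_inv]
      have he : (1-β) * (1-β)⁻¹ = 1 := mul_inv_cancel₀ (by linarith)
      have hepos : (0:ℝ) < (1-β)⁻¹ := by positivity
      nlinarith [hU1]
    have hT : (Real.sqrt k / u) ^ (1-β) = (Real.sqrt k) ^ (1-β) / (u:ℝ) ^ (1-β) :=
      Real.div_rpow (Real.sqrt_nonneg _) (Nat.cast_nonneg u) (1-β)
    refine ⟨fun _ => ⟨?_, ?_⟩, fun h => ((by linarith : False)).elim,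
      fun h => ((by linarith : False)).elim⟩
    · calc (Real.sqrt 2) ^ (-β) / 5 / (1 + 1/(1-β)) * (Real.sqrt k / u) ^ (1-β)
          = ((1 + 1/(1-β)) * (u:ℝ) ^ (1-β))⁻¹
              * ((Real.sqrt 2) ^ (-β) / 5 * (Real.sqrt k) ^ (1-β)) := by
            rw [hT]
            simp only [div_eq_mul_inv, mul_inv]
            ring
        _ ≤ (∑ j ∈ Finset.Icc 1 u, (j : ℝ) ^ (-β))⁻¹
              * ∑ i ∈ Finset.Icc ⌈Real.sqrt k⌉₊ ⌊Real.sqrt (2 * k)⌋₊, (i : ℝ) ^ (-β) :=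
            mul_le_mul (inv_anti' hDpos hDhi) hNlo (by positivity)
              (inv_nonneg.mpr hDpos.le)
        _ = powLawProbSqrtRange β u k := rfl
    · calc powLawProbSqrtRange β u k
          = (∑ j ∈ Finset.Icc 1 u, (j : ℝ) ^ (-β))⁻¹
              * ∑ i ∈ Finset.Icc ⌈Real.sqrt k⌉₊ ⌊Real.sqrt (2 * k)⌋₊, (i : ℝ) ^ (-β) := rfl
        _ ≤ ((u:ℝ) ^ (1-β))⁻¹ * (2 * (Real.sqrt k) ^ (1-β)) :=
            mul_le_mul (inv_anti' hUpos hDlo) hNhi hNpos (inv_nonneg.mpr hUpos.le)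
        _ = 2 * (Real.sqrt k / u) ^ (1-β) := by
            rw [hT]
            simp only [div_eq_mul_inv]
            ring
  · -- case β = 1
    subst heq
    have hL2pos : (0:ℝ) < Real.log 2 := Real.log_pos (by norm_num)
    have hdpos : (0:ℝ) < 1 + 1/Real.log 2 := by positivity
    refine ⟨(Real.sqrt 2) ^ (-(1:ℝ)) / 5 / (1 + 1/Real.log 2), 2,
      by positivity, by norm_num, ?_⟩
    intro k u hk hu
    have hk2 : (2:ℝ) ≤ (k:ℝ) := by exact_mod_cast hk
    have hu2 : (2:ℝ) ≤ (u:ℝ) := by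
      have h4 : Real.sqrt 4 = 2 := by
        rw [show (4:ℝ) = 2^2 by norm_num]
        exact Real.sqrt_sq (by norm_num)
      calc (2:ℝ) = Real.sqrt 4 := h4.symm
        _ ≤ Real.sqrt (2 * k) := Real.sqrt_le_sqrt (by nlinarith)
        _ ≤ (u:ℝ) := hu
    have hu1 : 1 ≤ u := by exact_mod_cast le_trans (by norm_num : (1:ℝ) ≤ 2) hu2
    have hupos : (0:ℝ) < u := by linarith
    obtain ⟨hNlo, hNhi⟩ := num_bounds 1 (by norm_num) k hk
    rw [show (1:ℝ) - 1 = 0 by norm_num, Real.rpow_zero, mul_one] at hNlo hNhi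
    have hNpos : (0:ℝ) ≤ ∑ i ∈ Finset.Icc ⌈Real.sqrt k⌉₊ ⌊Real.sqrt (2 * k)⌋₊,
        (i : ℝ) ^ (-(1:ℝ)) :=
      Finset.sum_nonneg fun i _ => Real.rpow_nonneg (Nat.cast_nonneg i) _
    have hL2 : Real.log 2 ≤ Real.log u := Real.log_le_log (by norm_num) hu2
    have hLpos : (0:ℝ) < Real.log u := lt_of_lt_of_le hL2pos hL2
    have hDh := den_harmonic u
    have hDlo : Real.log u ≤ ∑ j ∈ Finset.Icc 1 u, (j : ℝ) ^ (-(1:ℝ)) := by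
      rw [hDh]
      refine le_trans ?_ (log_add_one_le_harmonic u)
      apply Real.log_le_log hupos
      push_cast
      linarith
    have hDpos : (0:ℝ) < ∑ j ∈ Finset.Icc 1 u, (j : ℝ) ^ (-(1:ℝ)) :=
      lt_of_lt_of_le hLpos hDlo
    have hDhi : ∑ j ∈ Finset.Icc 1 u, (j : ℝ) ^ (-(1:ℝ))
        ≤ (1 + 1/Real.log 2) * Real.log u := by
      rw [hDh]
      have h1 := harmonic_le_one_add_log u
      rw [div_eq_mul_inv]
      have he : Real.log 2 * (Real.log 2)⁻¹ = 1 := mul_inv_cancel₀ (ne_of_gt hL2pos)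
      have hepos : (0:ℝ) < (Real.log 2)⁻¹ := by positivity
      nlinarith
    refine ⟨fun h => ((by linarith : False)).elim, fun _ => ⟨?_, ?_⟩,
      fun h => ((by linarith : False)).elim⟩
    · calc (Real.sqrt 2) ^ (-(1:ℝ)) / 5 / (1 + 1/Real.log 2) / Real.log u
          = ((1 + 1/Real.log 2) * Real.log u)⁻¹ * ((Real.sqrt 2) ^ (-(1:ℝ)) / 5) := by
            simp only [div_eq_mul_inv, mul_inv]
            ring
        _ ≤ (∑ j ∈ Finset.Icc 1 u, (j : ℝ) ^ (-(1:ℝ)))⁻¹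
              * ∑ i ∈ Finset.Icc ⌈Real.sqrt k⌉₊ ⌊Real.sqrt (2 * k)⌋₊, (i : ℝ) ^ (-(1:ℝ)) :=
            mul_le_mul (inv_anti' hDpos hDhi) hNlo (by positivity)
              (inv_nonneg.mpr hDpos.le)
        _ = powLawProbSqrtRange 1 u k := rfl
    · calc powLawProbSqrtRange 1 u k
          = (∑ j ∈ Finset.Icc 1 u, (j : ℝ) ^ (-(1:ℝ)))⁻¹
              * ∑ i ∈ Finset.Icc ⌈Real.sqrt k⌉₊ ⌊Real.sqrt (2 * k)⌋₊, (i : ℝ) ^ (-(1:ℝ)) := rfl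
        _ ≤ (Real.log u)⁻¹ * 2 :=
            mul_le_mul (inv_anti' hLpos hDlo) hNhi hNpos (inv_nonneg.mpr hLpos.le)
        _ = 2 / Real.log u := by rw [div_eq_mul_inv]; ring
  · -- case 1 < β
    have hβ1 : (0:ℝ) < β - 1 := by linarith
    have hdpos : (0:ℝ) < 1 + 1/(β-1) := by positivity
    refine ⟨(Real.sqrt 2) ^ (-β) / 5 / (1 + 1/(β-1)), 2,
      by positivity, by norm_num, ?_⟩
    intro k u hk hu
    have hk2 : (2:ℝ) ≤ (k:ℝ) := by exact_mod_cast hk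
    have hu2 : (2:ℝ) ≤ (u:ℝ) := by
      have h4 : Real.sqrt 4 = 2 := by
        rw [show (4:ℝ) = 2^2 by norm_num]
        exact Real.sqrt_sq (by norm_num)
      calc (2:ℝ) = Real.sqrt 4 := h4.symm
        _ ≤ Real.sqrt (2 * k) := Real.sqrt_le_sqrt (by nlinarith)
        _ ≤ (u:ℝ) := hu
    have hu1 : 1 ≤ u := by exact_mod_cast le_trans (by norm_num : (1:ℝ) ≤ 2) hu2
    have hupos : (0:ℝ) < u := by linarith
    obtain ⟨hNlo, hNhi⟩ := num_bounds β hβ k hk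
    rw [sqrt_pow_eq β k] at hNlo hNhi
    have hNpos : (0:ℝ) ≤ ∑ i ∈ Finset.Icc ⌈Real.sqrt k⌉₊ ⌊Real.sqrt (2 * k)⌋₊, (i : ℝ) ^ (-β) :=
      Finset.sum_nonneg fun i _ => Real.rpow_nonneg (Nat.cast_nonneg i) _
    have hDlo : (1:ℝ) ≤ ∑ j ∈ Finset.Icc 1 u, (j : ℝ) ^ (-β) := den_ge_one β u hu1
    have hDpos : (0:ℝ) < ∑ j ∈ Finset.Icc 1 u, (j : ℝ) ^ (-β) := lt_of_lt_of_le one_pos hDlo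
    have hDhi : ∑ j ∈ Finset.Icc 1 u, (j : ℝ) ^ (-β) ≤ 1 + 1/(β-1) := by
      have h1 := den_split β u hu1
      have h2 := le_trans (sum_tail_le_integral β hβ u hu1)
        (le_of_eq (integral_val β u hu1 (by linarith)))
      have hU0 : (0:ℝ) ≤ (u:ℝ) ^ (1-β) := Real.rpow_nonneg (Nat.cast_nonneg u) _
      have e1 : ((u:ℝ) ^ (1-β) - 1)/(1-β) = (1 - (u:ℝ) ^ (1-β))/(β-1) := by
        rw [show (1:ℝ) - (u:ℝ) ^ (1-β) = -((u:ℝ) ^ (1-β) - 1) by ring,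
          show (β:ℝ) - 1 = -(1-β) by ring, neg_div_neg_eq]
      rw [e1] at h2
      have h3 : (1 - (u:ℝ) ^ (1-β))/(β-1) ≤ 1/(β-1) := by
        gcongr <;> linarith
      linarith
    have hKpos : (0:ℝ) < (k:ℝ) ^ ((1-β)/2) := Real.rpow_pos_of_pos (by linarith) _
    refine ⟨fun h => ((by linarith : False)).elim, fun h => ((by linarith : False)).elim,
      fun _ => ⟨?_, ?_⟩⟩
    · calc (Real.sqrt 2) ^ (-β) / 5 / (1 + 1/(β-1)) * (k:ℝ) ^ ((1-β)/2)
          = (1 + 1/(β-1))⁻¹ * ((Real.sqrt 2) ^ (-β) / 5 * (k:ℝ) ^ ((1-β)/2)) := by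
            simp only [div_eq_mul_inv]
            ring
        _ ≤ (∑ j ∈ Finset.Icc 1 u, (j : ℝ) ^ (-β))⁻¹
              * ∑ i ∈ Finset.Icc ⌈Real.sqrt k⌉₊ ⌊Real.sqrt (2 * k)⌋₊, (i : ℝ) ^ (-β) :=
            mul_le_mul (inv_anti' hDpos hDhi) hNlo (by positivity)
              (inv_nonneg.mpr hDpos.le)
        _ = powLawProbSqrtRange β u k := rfl
    · calc powLawProbSqrtRange β u k
          = (∑ j ∈ Finset.Icc 1 u, (j : ℝ) ^ (-β))⁻¹
              * ∑ i ∈ Finset.Icc ⌈Real.sqrt k⌉₊ ⌊Real.sqrt (2 * k)⌋₊, (i : ℝ) ^ (-β) := rfl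
        _ ≤ (1:ℝ)⁻¹ * (2 * (k:ℝ) ^ ((1-β)/2)) :=
            mul_le_mul (inv_anti' one_pos hDlo) hNhi hNpos (by norm_num)
        _ = 2 * (k:ℝ) ^ ((1-β)/2) := by norm_num
end

section
/- There exists a constant A > 0 such that for all integers n, k, λ with 2 ≤ k ≤ n/4 and λ ≥ 1, and all reals p, c with √(k/n) ≤ p ≤ √(2k/n) and √(k/n) ≤ c ≤ √(2k/n), the following inequality holds: min(1, λ·(p/2)^k) · min(1, λ·c^k·(1−c)^{2pn−k}) ≥ e^{−A·k} · min(1, (k/n)^k · λ²). -/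
lemma min_one_mul_aux {t x : ℝ} (ht0 : 0 ≤ t) (ht1 : t ≤ 1) (hx : 0 ≤ x) :
    t * min 1 x ≤ min 1 (t * x) := by
  refine le_min ?_ ?_
  · calc t * min 1 x ≤ t * 1 := by
          exact mul_le_mul_of_nonneg_left (min_le_left _ _) ht0
      _ ≤ 1 := by linarith
  · exact mul_le_mul_of_nonneg_left (min_le_right _ _) ht0

lemma min_one_sq_aux {x : ℝ} (hx : 0 ≤ x) :
    min 1 x * min 1 x = min 1 (x * x) := by
  rcases le_total x 1 with h | h
  · rw [min_eq_right h, min_eq_right (by nlinarith)]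
  · rw [min_eq_left h, min_eq_left (by nlinarith), one_mul]


set_option maxHeartbeats 1600000 in
/-- There exists a constant `A > 0` such that for all integers
`n, k, λ` with `2 ≤ k ≤ n/4` and `λ ≥ 1`, and all reals `p, c` with
`√(k/n) ≤ p ≤ √(2k/n)` and `√(k/n) ≤ c ≤ √(2k/n)`,
`min(1, λ(p/2)^k) · min(1, λ c^k (1-c)^(2pn-k)) ≥ e^(-Ak) · min(1, (k/n)^k λ²)`. -/
theorem success_prob_one_iteration :
    ∃ A : ℝ, 0 < A ∧ ∀ n k lam : ℕ, ∀ p c : ℝ,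
      2 ≤ k → 4 * k ≤ n → 1 ≤ lam →
      Real.sqrt ((k : ℝ) / n) ≤ p → p ≤ Real.sqrt (2 * (k : ℝ) / n) →
      Real.sqrt ((k : ℝ) / n) ≤ c → c ≤ Real.sqrt (2 * (k : ℝ) / n) →
      Real.exp (-(A * k)) * min 1 (((k : ℝ) / n) ^ k * (lam : ℝ) ^ 2)
        ≤ min 1 ((lam : ℝ) * (p / 2) ^ k) *
          min 1 ((lam : ℝ) * c ^ k * (1 - c) ^ (2 * p * n - (k : ℝ))) := by
  refine ⟨17, by norm_num, ?_⟩
  intro n k lam p c hk hkn hlam hp1 hp2 hc1 hc2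
  have hk2 : (2:ℝ) ≤ (k:ℝ) := by exact_mod_cast hk
  have hkn' : 4 * (k:ℝ) ≤ (n:ℝ) := by exact_mod_cast hkn
  have hn0 : (0:ℝ) < n := by linarith
  have hk0 : (0:ℝ) < k := by linarith
  have hlam1 : (1:ℝ) ≤ (lam:ℝ) := by exact_mod_cast hlam
  set q : ℝ := (k:ℝ)/n with hq
  have hq0 : 0 < q := div_pos hk0 hn0
  have hq4 : q ≤ 1/4 := by rw [hq, div_le_iff₀ hn0]; linarith
  have hqn : q * n = k := by rw [hq]; field_simp
  set s : ℝ := Real.sqrt q with hs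
  have hs0 : 0 < s := Real.sqrt_pos.mpr hq0
  have hs2 : s^2 = q := Real.sq_sqrt hq0.le
  have hshalf : s ≤ 1/2 := by nlinarith
  set t : ℝ := Real.sqrt (2*(k:ℝ)/n) with ht
  have ht0 : 0 ≤ t := Real.sqrt_nonneg _
  have ht2 : t^2 = 2*q := by
    rw [ht, Real.sq_sqrt (by positivity), hq]; ring
  have ht34 : t ≤ 3/4 := by nlinarith
  have hc0 : 0 < c := lt_of_lt_of_le hs0 hc1
  have hc34 : c ≤ 3/4 := le_trans hc2 ht34
  have hp0 : 0 < p := lt_of_lt_of_le hs0 hp1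
  set E : ℝ := 2 * p * n - (k:ℝ) with hE
  have hsn : 2*(k:ℝ) ≤ s * n := by nlinarith
  have hE3 : 3*(k:ℝ) ≤ E := by
    have hpn : s * n ≤ p * n := mul_le_mul_of_nonneg_right hp1 hn0.le
    rw [hE]; nlinarith
  have hE0 : 0 ≤ E := by linarith
  have hcE : c * E ≤ 4*(k:ℝ) := by
    have h1 : c * p ≤ t * t := mul_le_mul hc2 hp2 hp0.le ht0
    have h2 : 2 * (n:ℝ) * (c*p) ≤ 2 * n * (t*t) :=
      mul_le_mul_of_nonneg_left h1 (by positivity)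
    have h3 : 0 ≤ c * k := by positivity
    have h4 : 2*(n:ℝ)*(t*t) = 4*(k:ℝ) := by
      have h5 : t*t = 2*q := by nlinarith [ht2]
      rw [h5, ← hqn]; ring
    rw [hE]; nlinarith [h2, h3, h4]
  -- base inequality exp(-4c) ≤ 1-c
  have hbase : Real.exp (-(4*c)) ≤ 1 - c := by
    have h1 := Real.add_one_le_exp (4*c)
    have h2 : (1:ℝ) ≤ (1-c) * Real.exp (4*c) := by nlinarith
    have h3 : Real.exp (-(4*c)) = 1 / Real.exp (4*c) := by
      rw [Real.exp_neg]; ring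
    rw [h3, div_le_iff₀ (Real.exp_pos _)]; linarith
  have hrpow : Real.exp (-(16*(k:ℝ))) ≤ (1-c) ^ E := by
    have h1 : Real.exp (-(4*c)) ^ E ≤ (1-c) ^ E :=
      Real.rpow_le_rpow (Real.exp_pos _).le hbase hE0
    have h2 : Real.exp (-(4*c)) ^ E = Real.exp (-(4*c)*E) := by
      rw [← Real.exp_one_rpow (-(4*c)), ← Real.rpow_mul (Real.exp_pos 1).le,
        Real.exp_one_rpow]
    calc Real.exp (-(16*(k:ℝ))) ≤ Real.exp (-(4*c)*E) :=
          Real.exp_le_exp.mpr (by nlinarith)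
      _ = Real.exp (-(4*c)) ^ E := h2.symm
      _ ≤ (1-c) ^ E := h1
  set X : ℝ := (lam:ℝ) * s^k with hX
  have hX0 : 0 ≤ X := by positivity
  set M : ℝ := min 1 X with hM
  have hM0 : 0 ≤ M := le_min zero_le_one hX0
  have hM1 : M ≤ 1 := min_le_left _ _
  -- first min
  have hmin1 : (1/2:ℝ)^k * M ≤ min 1 ((lam:ℝ) * (p/2)^k) := by
    have h1 : (1/2:ℝ)^k * X ≤ (lam:ℝ) * (p/2)^k := by
      have hsp : (s/2)^k ≤ (p/2)^k :=
        pow_le_pow_left₀ (by positivity) (by linarith) k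
      have : (1/2:ℝ)^k * X = (lam:ℝ) * (s/2)^k := by rw [hX]; ring
      rw [this]
      exact mul_le_mul_of_nonneg_left hsp (by linarith)
    calc (1/2:ℝ)^k * M ≤ min 1 ((1/2:ℝ)^k * X) :=
          min_one_mul_aux (by positivity) (by
            apply pow_le_one₀ <;> norm_num) hX0
      _ ≤ min 1 ((lam:ℝ) * (p/2)^k) := min_le_min le_rfl h1
  -- second min
  have hmin2 : Real.exp (-(16*(k:ℝ))) * M ≤ min 1 ((lam:ℝ) * c^k * (1-c)^E) := by
    have hexp1 : Real.exp (-(16*(k:ℝ))) ≤ 1 :=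
      Real.exp_le_one_iff.mpr (by nlinarith)
    have h1 : Real.exp (-(16*(k:ℝ))) * X ≤ (lam:ℝ) * c^k * (1-c)^E := by
      have hsc : X ≤ (lam:ℝ) * c^k := by
        rw [hX]
        exact mul_le_mul_of_nonneg_left (pow_le_pow_left₀ hs0.le hc1 k) (by linarith)
      calc Real.exp (-(16*(k:ℝ))) * X ≤ (1-c)^E * ((lam:ℝ) * c^k) :=
            mul_le_mul hrpow hsc hX0 (Real.rpow_nonneg (by linarith) _)
        _ = (lam:ℝ) * c^k * (1-c)^E := by ring
    calc Real.exp (-(16*(k:ℝ))) * M ≤ min 1 (Real.exp (-(16*(k:ℝ))) * X) :=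
          min_one_mul_aux (Real.exp_pos _).le hexp1 hX0
      _ ≤ _ := min_le_min le_rfl h1
  -- combine
  have hMM : M * M = min 1 (q ^ k * (lam:ℝ)^2) := by
    have h1 : X * X = q ^ k * (lam:ℝ)^2 := by rw [hX, ← hs2]; ring
    rw [hM, min_one_sq_aux hX0, h1]
  have hmin0 : 0 ≤ min 1 (q ^ k * (lam:ℝ)^2) := le_min zero_le_one (by positivity)
  have hconst : Real.exp (-(17*(k:ℝ))) ≤ (1/2:ℝ)^k * Real.exp (-(16*(k:ℝ))) := by
    have h1 : Real.exp (-((k:ℝ))) ≤ (1/2:ℝ)^k := by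
      have h2 : Real.exp (-((k:ℝ))) = Real.exp (-1) ^ k := by
        rw [← Real.exp_nat_mul]; ring_nf
      rw [h2]
      refine pow_le_pow_left₀ (Real.exp_pos _).le ?_ k
      rw [Real.exp_neg]
      have := Real.exp_one_gt_d9
      rw [inv_le_comm₀ (Real.exp_pos 1)]
      · linarith
      · norm_num
    have h3 : Real.exp (-(17*(k:ℝ))) = Real.exp (-((k:ℝ))) * Real.exp (-(16*(k:ℝ))) := by
      rw [← Real.exp_add]; ring_nf
    rw [h3]
    exact mul_le_mul_of_nonneg_right h1 (Real.exp_pos _).le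
  calc Real.exp (-(17*(k:ℝ))) * min 1 (q ^ k * (lam:ℝ)^2)
      ≤ ((1/2:ℝ)^k * Real.exp (-(16*(k:ℝ)))) * min 1 (q ^ k * (lam:ℝ)^2) :=
        mul_le_mul_of_nonneg_right hconst hmin0
    _ = ((1/2:ℝ)^k * M) * (Real.exp (-(16*(k:ℝ))) * M) := by rw [← hMM]; ring
    _ ≤ min 1 ((lam:ℝ) * (p/2)^k) * min 1 ((lam:ℝ) * c^k * (1-c)^E) :=
        mul_le_mul hmin1 hmin2 (by positivity) (le_min zero_le_one (by positivity))
end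

section
/- For every real β with 1 < β < 3 there exists a constant c > 0 (depending only on β) such that for every real m ≥ 1 and every integer u with u ≥ m, the random variable X ~ pow(β,u) satisfies E[min(1, X²/m²)] ≥ c·m^{1−β}. -/
open Finset

/-- The expectation `E[min(1, X²/m²)]` for `X ~ pow(β,u)`, namely
`C_{β,u} · ∑_{i=1}^{u} i^(-β) · min(1, i²/m²)`. -/
noncomputable def powLawTruncatedSecondMoment (β : ℝ) (u : ℕ) (m : ℝ) : ℝ :=
  (∑ j ∈ Finset.Icc 1 u, (j : ℝ) ^ (-β))⁻¹ *
    ∑ i ∈ Finset.Icc 1 u, (i : ℝ) ^ (-β) * min 1 ((i : ℝ) ^ 2 / m ^ 2)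

private lemma cube_div_three_le_sum_sq (n : ℕ) :
    (n : ℝ) ^ 3 / 3 ≤ ∑ i ∈ Finset.range n, ((i : ℝ) + 1) ^ 2 := by
  induction n with
  | zero => simp
  | succ k ih =>
    rw [Finset.sum_range_succ]
    push_cast
    nlinarith [ih, Nat.cast_nonneg (α := ℝ) k]

/-- For every real `β` with `1 < β < 3` there exists a constant
`c > 0` (depending only on `β`) such that for every real `m ≥ 1` and every integer
`u ≥ m`, the random variable `X ~ pow(β,u)` satisfies
`E[min(1, X²/m²)] ≥ c · m^(1-β)`. -/
theorem powLaw_truncated_second_moment_lower (β : ℝ) (hβ1 : 1 < β) (hβ3 : β < 3) :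
    ∃ c : ℝ, 0 < c ∧ ∀ (m : ℝ) (u : ℕ), 1 ≤ m → m ≤ (u : ℝ) →
      c * m ^ (1 - β) ≤ powLawTruncatedSecondMoment β u m := by
  have hsum : Summable (fun n : ℕ => ((n : ℝ) ^ β)⁻¹) :=
    (Real.summable_nat_rpow_inv).mpr hβ1
  set K := ∑' n : ℕ, ((n : ℝ) ^ β)⁻¹ with hKdef
  have hK1 : (1 : ℝ) ≤ K := by
    have h := Summable.le_tsum hsum 1 (fun j _ => by positivity)
    simpa using h
  have hKpos : 0 < K := lt_of_lt_of_le one_pos hK1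
  refine ⟨K⁻¹ * ((2 : ℝ) ^ (β - 3) / 3), by positivity, ?_⟩
  intro m u hm hu
  have hm0 : (0 : ℝ) < m := lt_of_lt_of_le one_pos hm
  set n := ⌊m⌋₊ with hn
  have hn1 : 1 ≤ n := Nat.le_floor (by simpa using hm)
  have hnm : (n : ℝ) ≤ m := Nat.floor_le hm0.le
  have hmn : m - 1 < (n : ℝ) := Nat.sub_one_lt_floor m
  have hnu : n ≤ u := by
    have h : (n : ℝ) ≤ (u : ℝ) := hnm.trans hu
    exact_mod_cast h
  have hu1 : 1 ≤ u := le_trans hn1 hnu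
  have hnpos : (0 : ℝ) < n := by exact_mod_cast hn1
  -- denominator bounds
  have hSle : (∑ j ∈ Icc 1 u, (j : ℝ) ^ (-β)) ≤ K := by
    have h : ∀ j ∈ Icc 1 u, (j : ℝ) ^ (-β) = ((j : ℝ) ^ β)⁻¹ := fun j _ =>
      Real.rpow_neg (Nat.cast_nonneg j) β
    rw [Finset.sum_congr rfl h]
    exact Summable.sum_le_tsum _ (fun j _ => by positivity) hsum
  have hSpos : 0 < ∑ j ∈ Icc 1 u, (j : ℝ) ^ (-β) := by
    apply Finset.sum_pos
    · intro j hj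
      have hj1 : 1 ≤ j := (Finset.mem_Icc.mp hj).1
      have : (0 : ℝ) < j := by exact_mod_cast hj1
      positivity
    · exact ⟨1, Finset.mem_Icc.mpr ⟨le_refl 1, hu1⟩⟩
  -- numerator lower bound
  have hTsub : (∑ i ∈ Icc 1 n, (i : ℝ) ^ (-β) * ((i : ℝ) ^ 2 / m ^ 2))
      ≤ ∑ i ∈ Icc 1 u, (i : ℝ) ^ (-β) * min 1 ((i : ℝ) ^ 2 / m ^ 2) := by
    have h1 : ∀ i ∈ Icc 1 n, (i : ℝ) ^ (-β) * ((i : ℝ) ^ 2 / m ^ 2)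
        = (i : ℝ) ^ (-β) * min 1 ((i : ℝ) ^ 2 / m ^ 2) := by
      intro i hi
      have hin : (i : ℝ) ≤ (n : ℝ) := by exact_mod_cast (Finset.mem_Icc.mp hi).2
      have him : (i : ℝ) ≤ m := hin.trans hnm
      have hle : (i : ℝ) ^ 2 / m ^ 2 ≤ 1 := by
        rw [div_le_one (by positivity)]
        nlinarith [Nat.cast_nonneg (α := ℝ) i]
      rw [min_eq_right hle]
    rw [Finset.sum_congr rfl h1]
    apply Finset.sum_le_sum_of_subset_of_nonneg (Finset.Icc_subset_Icc_right hnu)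
    intro i _ _
    have h0 : (0 : ℝ) ≤ min 1 ((i : ℝ) ^ 2 / m ^ 2) := le_min zero_le_one (by positivity)
    exact mul_nonneg (Real.rpow_nonneg (Nat.cast_nonneg i) _) h0
  have hstep : (∑ i ∈ Icc 1 n, (n : ℝ) ^ (-β) * ((i : ℝ) ^ 2 / m ^ 2))
      ≤ ∑ i ∈ Icc 1 n, (i : ℝ) ^ (-β) * ((i : ℝ) ^ 2 / m ^ 2) := by
    apply Finset.sum_le_sum
    intro i hi
    have hi1 : 1 ≤ i := (Finset.mem_Icc.mp hi).1
    have hipos : (0 : ℝ) < i := by exact_mod_cast hi1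
    have hin : (i : ℝ) ≤ (n : ℝ) := by exact_mod_cast (Finset.mem_Icc.mp hi).2
    have hr : (n : ℝ) ^ (-β) ≤ (i : ℝ) ^ (-β) :=
      Real.rpow_le_rpow_of_nonpos hipos hin (by linarith)
    exact mul_le_mul_of_nonneg_right hr (by positivity)
  have hsum_sq : (n : ℝ) ^ 3 / 3 ≤ ∑ i ∈ Icc 1 n, (i : ℝ) ^ 2 := by
    have h := cube_div_three_le_sum_sq n
    rw [← Finset.Ico_add_one_right_eq_Icc, Finset.sum_Ico_eq_sum_range]
    refine h.trans (le_of_eq (Finset.sum_congr rfl fun i _ => ?_))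
    push_cast; ring
  have hfact : (∑ i ∈ Icc 1 n, (n : ℝ) ^ (-β) * ((i : ℝ) ^ 2 / m ^ 2))
      = (n : ℝ) ^ (-β) / m ^ 2 * ∑ i ∈ Icc 1 n, (i : ℝ) ^ 2 := by
    rw [Finset.mul_sum]
    exact Finset.sum_congr rfl fun i _ => by ring
  -- rpow algebra
  have hpow : (n : ℝ) ^ (-β) * (n : ℝ) ^ 3 = (n : ℝ) ^ (3 - β) := by
    rw [show ((n : ℝ) ^ 3 : ℝ) = (n : ℝ) ^ ((3 : ℕ) : ℝ) from (Real.rpow_natCast _ 3).symm,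
      ← Real.rpow_add hnpos]
    congr 1
    push_cast; ring
  have hn1' : (1 : ℝ) ≤ (n : ℝ) := by exact_mod_cast hn1
  have hhalf : m / 2 ≤ (n : ℝ) := by linarith
  have h3β : (0 : ℝ) ≤ 3 - β := by linarith
  have hmono : (m / 2) ^ (3 - β) ≤ (n : ℝ) ^ (3 - β) :=
    Real.rpow_le_rpow (by positivity) hhalf h3β
  have hsplit : (m / 2) ^ (3 - β) = m ^ (1 - β) * m ^ 2 * (2 : ℝ) ^ (β - 3) := by
    have h1 : (m / 2) ^ (3 - β) = m ^ (3 - β) * (2 : ℝ) ^ (β - 3) := by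
      rw [Real.div_rpow hm0.le (by norm_num), div_eq_mul_inv,
        ← Real.rpow_neg (by norm_num : (0:ℝ) ≤ 2), neg_sub]
    have h2 : m ^ (3 - β) = m ^ (1 - β) * m ^ 2 := by
      rw [show (3:ℝ) - β = (1 - β) + ((2:ℕ):ℝ) by push_cast; ring, Real.rpow_add hm0,
        Real.rpow_natCast]
    rw [h1, h2]
  -- combine into lower bound on the numerator sum
  have hT : m ^ (1 - β) * ((2 : ℝ) ^ (β - 3) / 3)
      ≤ ∑ i ∈ Icc 1 u, (i : ℝ) ^ (-β) * min 1 ((i : ℝ) ^ 2 / m ^ 2) := by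
    have h1 : (n : ℝ) ^ (-β) / m ^ 2 * ((n : ℝ) ^ 3 / 3)
        ≤ (n : ℝ) ^ (-β) / m ^ 2 * ∑ i ∈ Icc 1 n, (i : ℝ) ^ 2 := by
      apply mul_le_mul_of_nonneg_left hsum_sq
      positivity
    have h2 : (n : ℝ) ^ (-β) / m ^ 2 * ((n : ℝ) ^ 3 / 3) = (n : ℝ) ^ (3 - β) / (3 * m ^ 2) := by
      rw [← hpow]; ring
    have h3 : m ^ (1 - β) * ((2 : ℝ) ^ (β - 3) / 3) ≤ (n : ℝ) ^ (3 - β) / (3 * m ^ 2) := by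
      rw [div_eq_mul_inv]
      calc m ^ (1 - β) * ((2 : ℝ) ^ (β - 3) / 3)
          = (m ^ (1 - β) * m ^ 2 * (2 : ℝ) ^ (β - 3)) * (3 * m ^ 2)⁻¹ := by
            have hmne : m ≠ 0 := hm0.ne'
            field_simp
        _ = (m / 2) ^ (3 - β) * (3 * m ^ 2)⁻¹ := by rw [hsplit]
        _ ≤ (n : ℝ) ^ (3 - β) * (3 * m ^ 2)⁻¹ := by
            apply mul_le_mul_of_nonneg_right hmono; positivity
    calc m ^ (1 - β) * ((2 : ℝ) ^ (β - 3) / 3)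
        ≤ (n : ℝ) ^ (3 - β) / (3 * m ^ 2) := h3
      _ = (n : ℝ) ^ (-β) / m ^ 2 * ((n : ℝ) ^ 3 / 3) := h2.symm
      _ ≤ (n : ℝ) ^ (-β) / m ^ 2 * ∑ i ∈ Icc 1 n, (i : ℝ) ^ 2 := h1
      _ = ∑ i ∈ Icc 1 n, (n : ℝ) ^ (-β) * ((i : ℝ) ^ 2 / m ^ 2) := hfact.symm
      _ ≤ ∑ i ∈ Icc 1 n, (i : ℝ) ^ (-β) * ((i : ℝ) ^ 2 / m ^ 2) := hstep
      _ ≤ _ := hTsub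
  have hTnn : (0 : ℝ) ≤ ∑ i ∈ Icc 1 u, (i : ℝ) ^ (-β) * min 1 ((i : ℝ) ^ 2 / m ^ 2) :=
    le_trans (by positivity) hT
  have hSinv : K⁻¹ ≤ (∑ j ∈ Icc 1 u, (j : ℝ) ^ (-β))⁻¹ :=
    inv_anti₀ hSpos hSle
  unfold powLawTruncatedSecondMoment
  calc K⁻¹ * ((2 : ℝ) ^ (β - 3) / 3) * m ^ (1 - β)
      = K⁻¹ * (m ^ (1 - β) * ((2 : ℝ) ^ (β - 3) / 3)) := by ring
    _ ≤ K⁻¹ * ∑ i ∈ Icc 1 u, (i : ℝ) ^ (-β) * min 1 ((i : ℝ) ^ 2 / m ^ 2) :=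
        mul_le_mul_of_nonneg_left hT (by positivity)
    _ ≤ (∑ j ∈ Icc 1 u, (j : ℝ) ^ (-β))⁻¹ *
        ∑ i ∈ Icc 1 u, (i : ℝ) ^ (-β) * min 1 ((i : ℝ) ^ 2 / m ^ 2) :=
        mul_le_mul_of_nonneg_right hSinv hTnn
end

section
/- If β_λ > 1, β_p > 1 and β_c > 1, then there exists a constant C > 0 (depending only on β_λ, β_p, β_c) such that for all integers N ≥ 2 and all integers u_λ ≥ 1 and 1 ≤ u_p, u_c ≤ √N, the heavy-tailed (1+(λ,λ)) GA maximizing OneMax on {0,1}^N satisfies E[T_I] ≤ C·N·ln(N), where T_I is the first iteration index t ≥ 0 at which the current solution x_t is the all-ones string. -/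
open Finset
open scoped ENNReal Classical

/-- Probability mass function of the power-law distribution `pow(β,u)` on `[1..u]`:
`Pr[X = i] = C_{β,u} · i^(-β)` for `i ∈ [1..u]`, where
`C_{β,u} = (∑_{j=1}^{u} j^(-β))⁻¹`. -/
noncomputable def powMass (β : ℝ) (u : ℕ) (i : ℕ) : ℝ≥0∞ :=
  if i ∈ Finset.Icc 1 u then
    ENNReal.ofReal ((∑ j ∈ Finset.Icc 1 u, (j : ℝ) ^ (-β))⁻¹ * (i : ℝ) ^ (-β))
  else 0

/-- Probability mass function of the binomial distribution `Bin(N,p)`. -/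
noncomputable def binomMass (N : ℕ) (p : ℝ) (ℓ : ℕ) : ℝ≥0∞ :=
  if ℓ ≤ N then ENNReal.ofReal ((N.choose ℓ : ℝ) * p ^ ℓ * (1 - p) ^ (N - ℓ)) else 0

/-- Probability mass at `z` of a mutation offspring of `x`: flip the bits of `x`
in a uniformly random `ℓ`-element set of positions.  The offspring `z` arises iff
it differs from `x` in exactly `ℓ` positions, and then with probability
`1 / (N choose ℓ)`. -/
noncomputable def mutMass {N : ℕ} (x : Fin N → Bool) (ℓ : ℕ) (z : Fin N → Bool) : ℝ≥0∞ :=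
  if (Finset.univ.filter fun i => z i ≠ x i).card = ℓ then ((N.choose ℓ : ℝ≥0∞))⁻¹ else 0

/-- Probability mass at `z` of a crossover offspring of `x` and `x'` with crossover
bias `c`: independently for every position, take the bit of `x'` with probability
`c` and the bit of `x` with probability `1 - c`. -/
noncomputable def crossMass {N : ℕ} (x x' : Fin N → Bool) (c : ℝ) (z : Fin N → Bool) : ℝ≥0∞ :=
  ∏ i : Fin N,
    ((if z i = x' i then ENNReal.ofReal c else 0) +
      (if z i = x i then ENNReal.ofReal (1 - c) else 0))

/-- Probability mass at `z` of the winner among `lam` independent samples from the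
mass function `q`, where a winner is an offspring of maximal `f`-value, ties broken
uniformly at random. -/
noncomputable def bestOfMass {σ : Type*} [Fintype σ] (f : σ → ℝ) (lam : ℕ)
    (q : σ → ℝ≥0∞) (z : σ) : ℝ≥0∞ :=
  ∑' w : Fin lam → σ, (∏ j, q (w j)) *
    (((Finset.univ.filter fun j => w j = z ∧ ∀ j', f (w j') ≤ f (w j)).card : ℝ≥0∞) /
      ((Finset.univ.filter fun j => ∀ j', f (w j') ≤ f (w j)).card : ℝ≥0∞))

/-- Transition probability of one iteration of the heavy-tailed `(1+(λ,λ))` GA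
maximizing `f : {0,1}^N → ℝ` with hyperparameters `βl, ul, βp, up, βc, uc`, from
current solution `x` to next solution `y`: sample `P ~ pow(βp,up)`,
`Q ~ pow(βc,uc)`, `λ ~ pow(βl,ul)` independently, set `p = P/√N`, `c = Q/√N`,
sample `ℓ ~ Bin(N,p)`; create `λ` mutation offspring (each flipping a fresh
uniformly random `ℓ`-element set of bits of `x`) and let `x'` be a best one (ties
uniform); create `λ` crossover offspring of `x` and `x'` with bias `c` and let
`yw` be a best one (ties uniform); accept `yw` iff `f(yw) ≥ f(x)`. -/
noncomputable def gaStep (N : ℕ) (βl βp βc : ℝ) (ul up uc : ℕ)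
    (f : (Fin N → Bool) → ℝ) (x y : Fin N → Bool) : ℝ≥0∞ :=
  ∑' (P : ℕ) (Q : ℕ) (lam : ℕ) (ℓ : ℕ),
    powMass βp up P * powMass βc uc Q * powMass βl ul lam *
      binomMass N ((P : ℝ) / Real.sqrt N) ℓ *
      ∑' x' : Fin N → Bool, bestOfMass f lam (mutMass x ℓ) x' *
        ∑' yw : Fin N → Bool,
          bestOfMass f lam (crossMass x x' ((Q : ℝ) / Real.sqrt N)) yw *
            (if f x ≤ f yw then (if y = yw then 1 else 0) else (if y = x then 1 else 0))

/-- Distribution of the current solution `x_t` of the heavy-tailed `(1+(λ,λ))` GA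
after `t` iterations: `x_0` is uniformly random in `{0,1}^N`, and each iteration
performs `gaStep`. -/
noncomputable def gaMarginal (N : ℕ) (βl βp βc : ℝ) (ul up uc : ℕ)
    (f : (Fin N → Bool) → ℝ) : ℕ → (Fin N → Bool) → ℝ≥0∞
  | 0 => fun _ => ((2 : ℝ≥0∞) ^ N)⁻¹
  | t + 1 => fun y =>
      ∑' x : Fin N → Bool, gaMarginal N βl βp βc ul up uc f t x * gaStep N βl βp βc ul up uc f x y

/-- Expected number of iterations `E[T_I]` until the current solution of the GA
lies in the (absorbing) set of good solutions, computed as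
`∑_{t≥0} Pr[x_t not good]`. -/
noncomputable def gaExpectedIterations (N : ℕ) (βl βp βc : ℝ) (ul up uc : ℕ)
    (f : (Fin N → Bool) → ℝ) (good : (Fin N → Bool) → Prop) : ℝ≥0∞ :=
  ∑' t : ℕ, ∑' x : Fin N → Bool,
    if good x then 0 else gaMarginal N βl βp βc ul up uc f t x

/-- The OneMax fitness: the number of one-bits of `x ∈ {0,1}^N`. -/
noncomputable def oneMax (N : ℕ) (x : Fin N → Bool) : ℝ :=
  ((Finset.univ.filter fun i => x i = true).card : ℝ)

lemma sum_powMass_le_one (β : ℝ) (u : ℕ) : ∑' i, powMass β u i ≤ 1 := by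
  rcases Nat.eq_zero_or_pos u with hu | hu
  · subst hu
    simp [powMass]
  · have hpos : ∀ j ∈ Finset.Icc 1 u, (0:ℝ) < (j:ℝ) ^ (-β) := by
      intro j hj
      have : (0:ℝ) < (j:ℝ) := by
        have := (Finset.mem_Icc.mp hj).1; positivity
      positivity
    have hsum : (0:ℝ) < ∑ j ∈ Finset.Icc 1 u, (j : ℝ) ^ (-β) := by
      apply Finset.sum_pos hpos
      exact ⟨1, Finset.mem_Icc.mpr ⟨le_refl 1, hu⟩⟩
    have : ∑' i, powMass β u i = ∑ i ∈ Finset.Icc 1 u,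
        ENNReal.ofReal ((∑ j ∈ Finset.Icc 1 u, (j : ℝ) ^ (-β))⁻¹ * (i : ℝ) ^ (-β)) := by
      rw [tsum_eq_sum (s := Finset.Icc 1 u)]
      · exact Finset.sum_congr rfl fun i hi => by simp [powMass, hi]
      · intro i hi; simp [powMass, hi]
    rw [this, ← ENNReal.ofReal_sum_of_nonneg, ← Finset.mul_sum,
        inv_mul_cancel₀ (ne_of_gt hsum)]
    · simp
    · intro i hi
      exact mul_nonneg (inv_nonneg.mpr hsum.le) (hpos i hi).le

lemma sum_binomMass_le_one (N : ℕ) (p : ℝ) (hp0 : 0 ≤ p) (hp1 : p ≤ 1) :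
    ∑' ℓ, binomMass N p ℓ ≤ 1 := by
  have : ∑' ℓ, binomMass N p ℓ = ∑ ℓ ∈ Finset.range (N+1),
      ENNReal.ofReal ((N.choose ℓ : ℝ) * p ^ ℓ * (1 - p) ^ (N - ℓ)) := by
    rw [tsum_eq_sum (s := Finset.range (N+1))]
    · exact Finset.sum_congr rfl fun ℓ hℓ => by
        simp [binomMass, Nat.lt_succ_iff.mp (Finset.mem_range.mp hℓ)]
    · intro ℓ hℓ
      have : ¬ ℓ ≤ N := by simpa [Nat.lt_succ_iff] using hℓ
      simp [binomMass, this]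
  rw [this, ← ENNReal.ofReal_sum_of_nonneg]
  · have hap : ∑ m ∈ Finset.range (N+1), p ^ m * (1 - p) ^ (N - m) * (N.choose m : ℝ) = (1:ℝ) := by
      have h := add_pow p (1-p) N
      simp only [add_sub_cancel, one_pow] at h
      exact h.symm
    have h2 : ∑ ℓ ∈ Finset.range (N+1), (N.choose ℓ : ℝ) * p ^ ℓ * (1 - p) ^ (N - ℓ)
        = ∑ m ∈ Finset.range (N+1), p ^ m * (1 - p) ^ (N - m) * (N.choose m : ℝ) :=
      Finset.sum_congr rfl fun ℓ _ => by ring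
    rw [h2, hap]; simp
  · intro ℓ _
    have h1p : (0:ℝ) ≤ 1 - p := by linarith
    positivity

lemma sum_mutMass_le_one {N : ℕ} (x : Fin N → Bool) (ℓ : ℕ) :
    ∑' z, mutMass x ℓ z ≤ 1 := by
  classical
  rw [tsum_fintype]
  unfold mutMass
  rw [Finset.sum_ite, Finset.sum_const, Finset.sum_const_zero, add_zero]
  simp only [nsmul_eq_mul]
  rcases Nat.eq_zero_or_pos (N.choose ℓ) with h | h
  · have hN : N < ℓ := Nat.choose_eq_zero_iff.mp h
    have hempty : (Finset.univ.filter fun z : Fin N → Bool =>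
        (Finset.univ.filter fun i => z i ≠ x i).card = ℓ) = ∅ := by
      apply Finset.filter_eq_empty_iff.mpr
      intro z _
      have : (Finset.univ.filter fun i => z i ≠ x i).card ≤ N := by
        simpa using Finset.card_filter_le Finset.univ (fun i => z i ≠ x i)
      omega
    rw [hempty]; simp
  · have hcard : (Finset.univ.filter fun z : Fin N → Bool =>
        (Finset.univ.filter fun i => z i ≠ x i).card = ℓ).card ≤ N.choose ℓ := by
      have : ∀ z ∈ (Finset.univ.filter fun z : Fin N → Bool =>
          (Finset.univ.filter fun i => z i ≠ x i).card = ℓ),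
          (Finset.univ.filter fun i => z i ≠ x i) ∈ Finset.powersetCard ℓ (Finset.univ : Finset (Fin N)) := by
        intro z hz
        simp only [Finset.mem_filter] at hz
        exact Finset.mem_powersetCard.mpr ⟨Finset.subset_univ _, hz.2⟩
      have hinj : Set.InjOn (fun z : Fin N → Bool => Finset.univ.filter fun i => z i ≠ x i)
          ((Finset.univ.filter fun z : Fin N → Bool =>
            (Finset.univ.filter fun i => z i ≠ x i).card = ℓ) : Finset _) := by
        intro a ha b hb hab0
        have hab : (Finset.univ.filter fun i => a i ≠ x i) = (Finset.univ.filter fun i => b i ≠ x i) := hab0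
        funext i
        by_cases hia : a i = x i <;> by_cases hib : b i = x i
        · rw [hia, hib]
        · exfalso
          have : i ∈ Finset.univ.filter fun i => b i ≠ x i := by simp [hib]
          rw [← hab] at this; simp [hia] at this
        · exfalso
          have : i ∈ Finset.univ.filter fun i => a i ≠ x i := by simp [hia]
          rw [hab] at this; simp [hib] at this
        · cases' Bool.eq_false_or_eq_true (a i) with h1 h1 <;>
          cases' Bool.eq_false_or_eq_true (b i) with h2 h2 <;>
          cases' Bool.eq_false_or_eq_true (x i) with h3 h3 <;> simp_all
      calc _ ≤ (Finset.powersetCard ℓ (Finset.univ : Finset (Fin N))).card :=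
            Finset.card_le_card_of_injOn _ this hinj
        _ = N.choose ℓ := by simp [Finset.card_powersetCard]
    calc ((Finset.univ.filter fun z : Fin N → Bool =>
          (Finset.univ.filter fun i => z i ≠ x i).card = ℓ).card : ℝ≥0∞) * (N.choose ℓ : ℝ≥0∞)⁻¹
        ≤ (N.choose ℓ : ℝ≥0∞) * (N.choose ℓ : ℝ≥0∞)⁻¹ := by
          have : ((Finset.univ.filter fun z : Fin N → Bool =>
              (Finset.univ.filter fun i => z i ≠ x i).card = ℓ).card : ℝ≥0∞)
              ≤ (N.choose ℓ : ℝ≥0∞) := by exact_mod_cast hcard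
          exact mul_le_mul_left this _
      _ ≤ 1 := ENNReal.mul_inv_le_one _

lemma sum_crossMass_le_one {N : ℕ} (x x' : Fin N → Bool) (c : ℝ) (hc0 : 0 ≤ c) (hc1 : c ≤ 1) :
    ∑' z, crossMass x x' c z ≤ 1 := by
  classical
  rw [tsum_fintype]
  unfold crossMass
  rw [← Fintype.piFinset_univ,
    ← Finset.prod_univ_sum (fun _ : Fin N => (Finset.univ : Finset Bool))
      (fun i b => ((if b = x' i then ENNReal.ofReal c else 0) +
        (if b = x i then ENNReal.ofReal (1 - c) else 0)))]
  have hone : ENNReal.ofReal c + ENNReal.ofReal (1-c) = 1 := by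
    rw [← ENNReal.ofReal_add hc0 (by linarith)]; norm_num
  have key : ∀ i : Fin N, (∑ b : Bool, ((if b = x' i then ENNReal.ofReal c else 0) +
      (if b = x i then ENNReal.ofReal (1 - c) else 0))) = 1 := by
    intro i
    rw [Fintype.sum_bool]
    cases hx' : x' i <;> cases hx : x i <;>
      simp only [hx', hx, if_true, if_false, reduceIte, add_zero, zero_add] <;>
      first
        | exact hone
        | (rw [add_comm]; exact hone)
        | (rw [add_assoc, add_comm]; exact hone)
        | simp [hone, add_comm]
  calc ∏ i : Fin N, (∑ b : Bool, ((if b = x' i then ENNReal.ofReal c else 0) +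
        (if b = x i then ENNReal.ofReal (1 - c) else 0)))
      = ∏ i : Fin N, 1 := Finset.prod_congr rfl (fun i _ => key i)
    _ ≤ 1 := by simp

lemma sum_bestOfMass_le_one {σ : Type*} [Fintype σ] (f : σ → ℝ) (lam : ℕ)
    (q : σ → ℝ≥0∞) (hq : ∑' z, q z ≤ 1) :
    ∑' z, bestOfMass f lam q z ≤ 1 := by
  classical
  unfold bestOfMass
  rw [ENNReal.tsum_comm]
  have hterm : ∀ w : Fin lam → σ,
      (∑' z : σ, (∏ j, q (w j)) *
        (((Finset.univ.filter fun j => w j = z ∧ ∀ j', f (w j') ≤ f (w j)).card : ℝ≥0∞) /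
          ((Finset.univ.filter fun j => ∀ j', f (w j') ≤ f (w j)).card : ℝ≥0∞)))
        ≤ ∏ j, q (w j) := by
    intro w
    rw [ENNReal.tsum_mul_left]
    set D := (Finset.univ.filter fun j : Fin lam => ∀ j', f (w j') ≤ f (w j)).card with hD
    have hsum : ∑' z : σ, (((Finset.univ.filter fun j => w j = z ∧ ∀ j', f (w j') ≤ f (w j)).card : ℝ≥0∞) / (D : ℝ≥0∞)) ≤ 1 := by
      rw [tsum_fintype]
      have : ∑ z : σ, (((Finset.univ.filter fun j => w j = z ∧ ∀ j', f (w j') ≤ f (w j)).card : ℝ≥0∞)) = (D : ℝ≥0∞) := by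
       have hfib : ∀ z : σ, (Finset.filter (fun a => w a = z)
          (Finset.filter (fun j => ∀ j', f (w j') ≤ f (w j)) Finset.univ))
          = Finset.univ.filter fun j => w j = z ∧ ∀ j', f (w j') ≤ f (w j) := by
         intro z
         rw [Finset.filter_filter]
         exact Finset.filter_congr fun j _ => by tauto
       have hcard := Finset.card_eq_sum_card_fiberwise
          (f := fun j : Fin lam => w j) (s := Finset.univ.filter fun j => ∀ j', f (w j') ≤ f (w j))
          (t := Finset.univ) (fun x _ => Finset.mem_univ _)
       simp only [hfib] at hcard
       rw [hD, hcard]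
       push_cast
       rfl
      calc ∑ z : σ, (((Finset.univ.filter fun j => w j = z ∧ ∀ j', f (w j') ≤ f (w j)).card : ℝ≥0∞) / (D : ℝ≥0∞))
          = (∑ z : σ, ((Finset.univ.filter fun j => w j = z ∧ ∀ j', f (w j') ≤ f (w j)).card : ℝ≥0∞)) / (D : ℝ≥0∞) := by
            simp only [div_eq_mul_inv, Finset.sum_mul]
        _ = (D : ℝ≥0∞) / (D : ℝ≥0∞) := by rw [this]
        _ ≤ 1 := ENNReal.div_self_le_one
    calc (∏ j, q (w j)) * ∑' z : σ, (((Finset.univ.filter fun j => w j = z ∧ ∀ j', f (w j') ≤ f (w j)).card : ℝ≥0∞) / (D : ℝ≥0∞))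
        ≤ (∏ j, q (w j)) * 1 := mul_le_mul_right hsum _
      _ = ∏ j, q (w j) := mul_one _
  calc ∑' (w : Fin lam → σ) (z : σ), (∏ j, q (w j)) *
        (((Finset.univ.filter fun j => w j = z ∧ ∀ j', f (w j') ≤ f (w j)).card : ℝ≥0∞) /
          ((Finset.univ.filter fun j => ∀ j', f (w j') ≤ f (w j)).card : ℝ≥0∞))
      ≤ ∑' w : Fin lam → σ, ∏ j, q (w j) := ENNReal.tsum_le_tsum hterm
    _ = ∏ _j : Fin lam, ∑' s : σ, q s := by
        rw [tsum_fintype, ← Fintype.piFinset_univ,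
          ← Finset.prod_univ_sum (fun _ : Fin lam => (Finset.univ : Finset σ)) (fun _ s => q s)]
        simp [tsum_fintype]
    _ ≤ ∏ _j : Fin lam, 1 := Finset.prod_le_prod' (fun _ _ => by simpa [tsum_fintype] using hq)
    _ = 1 := by simp

lemma bestOfMass_one {σ : Type*} [Fintype σ] (f : σ → ℝ) (q : σ → ℝ≥0∞) (z : σ) :
    bestOfMass f 1 q z = q z := by
  classical
  unfold bestOfMass
  rw [tsum_fintype]
  rw [← (Equiv.funUnique (Fin 1) σ).symm.sum_comp (fun w : Fin 1 → σ => (∏ j, q (w j)) *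
    (((Finset.univ.filter fun j => w j = z ∧ ∀ j', f (w j') ≤ f (w j)).card : ℝ≥0∞) /
      ((Finset.univ.filter fun j => ∀ j', f (w j') ≤ f (w j)).card : ℝ≥0∞)))]
  have : ∀ s : σ, ((Equiv.funUnique (Fin 1) σ).symm s : Fin 1 → σ) = fun _ => s := fun s => rfl
  simp only [this]
  have hmax : ∀ s : σ, (Finset.univ.filter fun j : Fin 1 => ∀ j' : Fin 1, f s ≤ f s).card = 1 := by
    intro s
    rw [Finset.filter_true_of_mem (fun j _ => fun j' => le_refl _)]
    simp
  have hnum : ∀ s : σ, (Finset.univ.filter fun j : Fin 1 => s = z ∧ ∀ j' : Fin 1, f s ≤ f s).card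
      = if s = z then 1 else 0 := by
    intro s
    by_cases h : s = z
    · rw [Finset.filter_true_of_mem (fun j _ => ⟨h, fun j' => le_refl _⟩)]
      simp [h]
    · rw [Finset.filter_false_of_mem (fun j _ => by tauto)]
      simp [h]
  simp only [Finset.prod_const, Fintype.card_fin, pow_one, hmax, hnum]
  simp [mul_ite, Finset.sum_ite_eq', Finset.card_univ]

section Lemmas
variable {N : ℕ}

lemma level_le {ι κ : Type*} (a : ι → ℝ≥0∞) (r : ι → κ → ℝ≥0∞)
    (h : ∀ v, a v = 0 ∨ ∑' y, r v y ≤ 1) :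
    ∑' (y : κ) (v : ι), a v * r v y ≤ ∑' v, a v := by
  rw [ENNReal.tsum_comm]
  refine ENNReal.tsum_le_tsum fun v => ?_
  rw [ENNReal.tsum_mul_left]
  rcases h v with h0 | h1
  · simp [h0]
  · calc a v * ∑' y, r v y ≤ a v * 1 := mul_le_mul_right h1 _
      _ = a v := mul_one _

lemma powMass_eq_zero {β : ℝ} {u i : ℕ} (h : i ∉ Finset.Icc 1 u) : powMass β u i = 0 := by
  simp [powMass, h]

lemma step_sum_le_one (βl βp βc : ℝ) (ul up uc : ℕ) (f : (Fin N → Bool) → ℝ)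
    (x : Fin N → Bool) (hN : 1 ≤ N)
    (hup : (up : ℝ) ≤ Real.sqrt N) (huc : (uc : ℝ) ≤ Real.sqrt N) :
    ∑' y, gaStep N βl βp βc ul up uc f x y ≤ 1 := by
  classical
  have hsqrt : (0:ℝ) < Real.sqrt N := Real.sqrt_pos.mpr (by exact_mod_cast hN)
  unfold gaStep
  simp only [mul_assoc, ENNReal.tsum_mul_left]
  have hind : ∀ yw : Fin N → Bool,
      ∑' y : Fin N → Bool, (if f x ≤ f yw then (if y = yw then (1:ℝ≥0∞) else 0)
        else (if y = x then 1 else 0)) = 1 := by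
    intro yw
    by_cases h : f x ≤ f yw <;> simp [h, tsum_ite_eq]
  calc _ ≤ ∑' P, powMass βp up P := by
        refine level_le _ _ fun P => ?_
        by_cases hP : P ∈ Finset.Icc 1 up
        swap
        · exact Or.inl (powMass_eq_zero hP)
        right
        have hp0 : (0:ℝ) ≤ (P:ℝ) / Real.sqrt N := by positivity
        have hp1 : (P:ℝ) / Real.sqrt N ≤ 1 := by
          rw [div_le_one hsqrt]
          calc ((P:ℝ)) ≤ (up:ℝ) := by exact_mod_cast (Finset.mem_Icc.mp hP).2
            _ ≤ Real.sqrt N := hup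
        calc _ ≤ ∑' Q, powMass βc uc Q := by
              refine level_le _ _ fun Q => ?_
              by_cases hQ : Q ∈ Finset.Icc 1 uc
              swap
              · exact Or.inl (powMass_eq_zero hQ)
              right
              have hc0 : (0:ℝ) ≤ (Q:ℝ) / Real.sqrt N := by positivity
              have hc1 : (Q:ℝ) / Real.sqrt N ≤ 1 := by
                rw [div_le_one hsqrt]
                calc ((Q:ℝ)) ≤ (uc:ℝ) := by exact_mod_cast (Finset.mem_Icc.mp hQ).2
                  _ ≤ Real.sqrt N := huc
              calc _ ≤ ∑' lam, powMass βl ul lam := by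
                    refine level_le _ _ fun lam => Or.inr ?_
                    calc _ ≤ ∑' ℓ, binomMass N ((P:ℝ)/Real.sqrt N) ℓ := by
                          refine level_le _ _ fun ℓ => Or.inr ?_
                          calc _ ≤ ∑' x', bestOfMass f lam (mutMass x ℓ) x' := by
                                refine level_le _ _ fun x' => Or.inr ?_
                                calc _ ≤ ∑' yw, bestOfMass f lam (crossMass x x' ((Q:ℝ)/Real.sqrt N)) yw := by
                                      refine level_le _ _ fun yw => Or.inr ?_
                                      rw [hind yw]
                                  _ ≤ 1 := sum_bestOfMass_le_one _ _ _
                                        (sum_crossMass_le_one x x' _ hc0 hc1)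
                            _ ≤ 1 := sum_bestOfMass_le_one _ _ _ (sum_mutMass_le_one x ℓ)
                      _ ≤ 1 := sum_binomMass_le_one N _ hp0 hp1
                _ ≤ 1 := sum_powMass_le_one βl ul
          _ ≤ 1 := sum_powMass_le_one βc uc
    _ ≤ 1 := sum_powMass_le_one βp up

lemma step_eq_zero_of_lt (βl βp βc : ℝ) (ul up uc : ℕ) (f : (Fin N → Bool) → ℝ)
    {x y : Fin N → Bool} (hlt : f y < f x) :
    gaStep N βl βp βc ul up uc f x y = 0 := by
  have hind : ∀ yw : Fin N → Bool,
      (if f x ≤ f yw then (if y = yw then (1:ℝ≥0∞) else 0)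
        else (if y = x then 1 else 0)) = 0 := by
    intro yw
    by_cases h : f x ≤ f yw
    · have : y ≠ yw := fun hyw => absurd (hyw ▸ hlt) (not_lt.mpr (hyw ▸ h))
      simp [h, this]
    · have : y ≠ x := fun hyx => absurd (hyx ▸ hlt) (lt_irrefl _)
      simp [h, this]
  unfold gaStep
  simp [hind]

lemma mut_cross_mass (x : Fin N → Bool) {j : Fin N} (hj : x j = false)
    (r : ℝ) (hr0 : 0 ≤ r) (hr1 : r ≤ 1) :
    ∑' ℓ : ℕ, binomMass N r ℓ * ∑' x' : Fin N → Bool,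
        mutMass x ℓ x' * crossMass x x' r (Function.update x j true)
      = ENNReal.ofReal (r * r * (1 - r * r) ^ (N - 1)) := by
  classical
  set zj := Function.update x j true with hzj
  have h1r : (0:ℝ) ≤ 1 - r := by linarith
  have h1rr : (0:ℝ) ≤ 1 - r * r := by nlinarith
  -- step 1: push binom inside and swap
  have swap1 : ∑' ℓ : ℕ, binomMass N r ℓ * ∑' x' : Fin N → Bool,
      mutMass x ℓ x' * crossMass x x' r zj
      = ∑' x' : Fin N → Bool, ∑' ℓ : ℕ,
        (binomMass N r ℓ * mutMass x ℓ x') * crossMass x x' r zj := by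
    rw [← ENNReal.tsum_comm]
    apply tsum_congr
    intro ℓ
    rw [← ENNReal.tsum_mul_left]
    exact tsum_congr fun x' => by ring
  rw [swap1]
  -- step 2: single ℓ
  have step2 : ∀ x' : Fin N → Bool, ∑' ℓ : ℕ,
      (binomMass N r ℓ * mutMass x ℓ x') * crossMass x x' r zj
      = ENNReal.ofReal (r ^ ((Finset.univ.filter fun i => x' i ≠ x i).card)
          * (1 - r) ^ (N - (Finset.univ.filter fun i => x' i ≠ x i).card)) * crossMass x x' r zj := by
    intro x'
    set D := (Finset.univ.filter fun i => x' i ≠ x i).card with hD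
    have hDN : D ≤ N := by
      rw [hD]
      simpa using Finset.card_filter_le Finset.univ (fun i => x' i ≠ x i)
    rw [tsum_eq_single D]
    · congr 1
      rw [show mutMass x D x' = ((N.choose D : ℝ≥0∞))⁻¹ by simp [mutMass, hD]]
      rw [show binomMass N r D = ENNReal.ofReal ((N.choose D : ℝ) * r ^ D * (1 - r) ^ (N - D)) by
        simp [binomMass, hDN]]
      have hch : (0:ℝ) < (N.choose D : ℝ) := by exact_mod_cast Nat.choose_pos hDN
      rw [mul_assoc ((N.choose D : ℝ)) _ _, ENNReal.ofReal_mul hch.le, ENNReal.ofReal_natCast,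
        mul_comm ((N.choose D : ℝ≥0∞)) _, mul_assoc]
      rw [ENNReal.mul_inv_cancel (by exact_mod_cast hch.ne' : (N.choose D : ℝ≥0∞) ≠ 0)
        (ENNReal.natCast_ne_top _), mul_one]
    · intro ℓ hℓ
      rw [show mutMass x ℓ x' = 0 by unfold mutMass; exact if_neg (Ne.symm hℓ)]
      ring
  rw [tsum_congr step2]
  -- step 3: product form
  have step3 : ∀ x' : Fin N → Bool,
      ENNReal.ofReal (r ^ ((Finset.univ.filter fun i => x' i ≠ x i).card)
          * (1 - r) ^ (N - (Finset.univ.filter fun i => x' i ≠ x i).card)) * crossMass x x' r zj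
      = ∏ i : Fin N, (ENNReal.ofReal (if x' i = x i then 1 - r else r) *
          ((if zj i = x' i then ENNReal.ofReal r else 0) +
            (if zj i = x i then ENNReal.ofReal (1 - r) else 0))) := by
    intro x'
    rw [Finset.prod_mul_distrib]
    congr 1
    set D := (Finset.univ.filter fun i => x' i ≠ x i).card with hD
    have hsplit := Finset.card_filter_add_card_filter_not
      (s := (Finset.univ : Finset (Fin N))) (p := fun i => x' i = x i)
    rw [Finset.card_univ, Fintype.card_fin] at hsplit
    have hne : (Finset.univ.filter fun i => ¬ (x' i = x i)).card = D := rfl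
    rw [hne] at hsplit
    have heq : (Finset.univ.filter fun i => x' i = x i).card = N - D := by omega
    simp only [apply_ite ENNReal.ofReal]
    rw [Finset.prod_ite, Finset.prod_const, Finset.prod_const, heq, hne,
      ENNReal.ofReal_mul (by positivity), ENNReal.ofReal_pow hr0, ENNReal.ofReal_pow h1r]
    ring
  rw [tsum_congr step3, tsum_fintype, ← Fintype.piFinset_univ,
    ← Finset.prod_univ_sum (fun _ : Fin N => (Finset.univ : Finset Bool))
      (fun i b => (ENNReal.ofReal (if b = x i then 1 - r else r) *
        ((if zj i = b then ENNReal.ofReal r else 0) +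
          (if zj i = x i then ENNReal.ofReal (1 - r) else 0))))]
  have hsum : ∀ i : Fin N, (∑ b : Bool, (ENNReal.ofReal (if b = x i then 1 - r else r) *
      ((if zj i = b then ENNReal.ofReal r else 0) +
        (if zj i = x i then ENNReal.ofReal (1 - r) else 0))))
      = if i = j then ENNReal.ofReal (r * r) else ENNReal.ofReal (1 - r * r) := by
    intro i
    rw [Fintype.sum_bool]
    by_cases hij : i = j
    · subst hij
      have hzji : zj i = true := Function.update_self i true x
      calc _ = ENNReal.ofReal r * ENNReal.ofReal r := by simp [hzji, hj] <;> ring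
        _ = _ := by rw [if_pos rfl]; exact (ENNReal.ofReal_mul hr0).symm
    · have hzji : zj i = x i := Function.update_of_ne hij true x
      have expand : ENNReal.ofReal (1-r) * (ENNReal.ofReal r + ENNReal.ofReal (1-r)) +
          ENNReal.ofReal r * ENNReal.ofReal (1-r) = ENNReal.ofReal (1 - r*r) := by
        rw [← ENNReal.ofReal_add hr0 h1r, ← ENNReal.ofReal_mul h1r, ← ENNReal.ofReal_mul hr0,
          ← ENNReal.ofReal_add (by positivity) (by positivity)]
        congr 1
        ring
      cases hxi : x i
      · calc _ = ENNReal.ofReal (1-r) * (ENNReal.ofReal r + ENNReal.ofReal (1-r)) +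
              ENNReal.ofReal r * ENNReal.ofReal (1-r) := by
              simp [hzji, hxi] <;> ring
          _ = _ := by rw [if_neg hij]; exact expand
      · calc _ = ENNReal.ofReal (1-r) * (ENNReal.ofReal r + ENNReal.ofReal (1-r)) +
              ENNReal.ofReal r * ENNReal.ofReal (1-r) := by
              simp [hzji, hxi] <;> ring
          _ = _ := by rw [if_neg hij]; exact expand
  rw [Finset.prod_congr rfl (fun i _ => hsum i),
    Finset.prod_eq_mul_prod_sdiff_singleton_of_mem (Finset.mem_univ j)]
  have hrest : ∏ i ∈ Finset.univ \ {j},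
      (if i = j then ENNReal.ofReal (r * r) else ENNReal.ofReal (1 - r * r))
      = ENNReal.ofReal (1 - r * r) ^ (N - 1) := by
    rw [Finset.prod_congr rfl (fun i hi => by
      rw [if_neg (by simpa using (Finset.mem_sdiff.mp hi).2)]), Finset.prod_const]
    congr 1
    rw [Finset.card_sdiff_of_subset (by simp), Finset.card_univ, Fintype.card_fin, Finset.card_singleton]
  rw [hrest, if_pos rfl, ← ENNReal.ofReal_pow h1rr, ← ENNReal.ofReal_mul (by positivity)]


lemma oneMax_update {x : Fin N → Bool} {j : Fin N} (hj : x j = false) :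
    oneMax N (Function.update x j true) = oneMax N x + 1 := by
  classical
  unfold oneMax
  have hset : (Finset.univ.filter fun i => Function.update x j true i = true)
      = insert j (Finset.univ.filter fun i => x i = true) := by
    ext i
    by_cases hij : i = j
    · subst hij; simp [Function.update_self]
    · simp [Function.update_of_ne hij, hij]
  rw [hset, Finset.card_insert_of_notMem (by simp [hj])]
  push_cast
  ring

lemma improve_lower (βl βp βc : ℝ) (ul up uc : ℕ) (hN : 1 ≤ N) (x : Fin N → Bool) :
    ((Finset.univ.filter fun i => x i = false).card : ℝ≥0∞) *
      ((powMass βp up 1 * powMass βc uc 1 * powMass βl ul 1) *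
        ENNReal.ofReal ((1/(N:ℝ)) * (1 - 1/(N:ℝ)) ^ (N - 1)))
    ≤ ∑' y, if oneMax N x < oneMax N y
        then gaStep N βl βp βc ul up uc (oneMax N) x y else 0 := by
  classical
  set r : ℝ := 1 / Real.sqrt N with hr
  have hNpos : (0:ℝ) < N := by exact_mod_cast hN
  have hsq : Real.sqrt N * Real.sqrt N = N := Real.mul_self_sqrt hNpos.le
  have hsqrt1 : 1 ≤ Real.sqrt N := by
    rw [show (1:ℝ) = Real.sqrt 1 by simp]
    exact Real.sqrt_le_sqrt (by exact_mod_cast hN)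
  have hsqrt0 : (0:ℝ) < Real.sqrt N := by linarith
  have hr0 : 0 ≤ r := by positivity
  have hr1 : r ≤ 1 := by rw [hr, div_le_one hsqrt0]; exact hsqrt1
  have hrr : r * r = 1 / (N:ℝ) := by
    rw [hr, div_mul_div_comm, one_mul, hsq]
  have hstep : ∀ j ∈ (Finset.univ.filter fun i => x i = false),
      (powMass βp up 1 * powMass βc uc 1 * powMass βl ul 1) *
        ENNReal.ofReal ((1/(N:ℝ)) * (1 - 1/(N:ℝ)) ^ (N - 1))
      ≤ gaStep N βl βp βc ul up uc (oneMax N) x (Function.update x j true) := by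
    intro j hjZ
    have hjf : x j = false := by simpa using hjZ
    set zj := Function.update x j true with hzj
    have hfle : oneMax N x ≤ oneMax N zj := by rw [oneMax_update hjf]; linarith
    unfold gaStep
    refine le_trans ?_ (ENNReal.le_tsum 1)
    refine le_trans ?_ (ENNReal.le_tsum 1)
    refine le_trans ?_ (ENNReal.le_tsum 1)
    simp only [bestOfMass_one, Nat.cast_one, ← hr]
    have hx' : ∀ (ℓ : ℕ) (x' : Fin N → Bool),
        crossMass x x' r zj ≤ ∑' yw, crossMass x x' r yw *
          (if oneMax N x ≤ oneMax N yw then (if zj = yw then (1:ℝ≥0∞) else 0)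
            else (if zj = x then 1 else 0)) := by
      intro ℓ x'
      refine le_trans ?_ (ENNReal.le_tsum zj)
      rw [if_pos hfle, if_pos rfl, mul_one]
    calc (powMass βp up 1 * powMass βc uc 1 * powMass βl ul 1) *
          ENNReal.ofReal ((1/(N:ℝ)) * (1 - 1/(N:ℝ)) ^ (N - 1))
        = (powMass βp up 1 * powMass βc uc 1 * powMass βl ul 1) *
          ∑' ℓ : ℕ, binomMass N r ℓ * ∑' x' : Fin N → Bool,
            mutMass x ℓ x' * crossMass x x' r zj := by
          rw [mut_cross_mass x hjf r hr0 hr1, hrr]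
      _ = ∑' ℓ : ℕ, (powMass βp up 1 * powMass βc uc 1 * powMass βl ul 1) *
            (binomMass N r ℓ * ∑' x' : Fin N → Bool,
              mutMass x ℓ x' * crossMass x x' r zj) := ENNReal.tsum_mul_left.symm
      _ ≤ ∑' ℓ : ℕ, powMass βp up 1 * powMass βc uc 1 * powMass βl ul 1 *
            binomMass N r ℓ * ∑' x' : Fin N → Bool, mutMass x ℓ x' *
              ∑' yw, crossMass x x' r yw *
                (if oneMax N x ≤ oneMax N yw then (if zj = yw then (1:ℝ≥0∞) else 0)
                  else (if zj = x then 1 else 0)) := by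
          refine ENNReal.tsum_le_tsum fun ℓ => ?_
          rw [mul_assoc (powMass βp up 1 * powMass βc uc 1 * powMass βl ul 1)]
          refine mul_le_mul_right ?_ _
          refine mul_le_mul_right ?_ _
          exact ENNReal.tsum_le_tsum fun x' => mul_le_mul_right (hx' ℓ x') _
  -- now sum over j
  rw [tsum_fintype]
  have hinj : ∀ j ∈ (Finset.univ.filter fun i => x i = false),
      ∀ j' ∈ (Finset.univ.filter fun i => x i = false),
      Function.update x j true = Function.update x j' true → j = j' := by
    intro j hj j' hj' heq
    by_contra hne
    have h1 := congrFun heq j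
    rw [Function.update_self, Function.update_of_ne hne] at h1
    have hjf : x j = false := by simpa using hj
    rw [hjf] at h1
    simp at h1
  have hsub : ∑ y ∈ (Finset.univ.filter fun i => x i = false).image
      (fun j => Function.update x j true),
      (if oneMax N x < oneMax N y then gaStep N βl βp βc ul up uc (oneMax N) x y else 0)
      ≤ ∑ y : Fin N → Bool,
      (if oneMax N x < oneMax N y then gaStep N βl βp βc ul up uc (oneMax N) x y else 0) :=
    Finset.sum_le_sum_of_subset (Finset.subset_univ _)
  rw [Finset.sum_image hinj] at hsub
  refine le_trans ?_ hsub
  rw [show (((Finset.univ.filter fun i => x i = false).card : ℝ≥0∞)) *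
      ((powMass βp up 1 * powMass βc uc 1 * powMass βl ul 1) *
        ENNReal.ofReal ((1/(N:ℝ)) * (1 - 1/(N:ℝ)) ^ (N - 1)))
      = ∑ _j ∈ (Finset.univ.filter fun i => x i = false),
        ((powMass βp up 1 * powMass βc uc 1 * powMass βl ul 1) *
          ENNReal.ofReal ((1/(N:ℝ)) * (1 - 1/(N:ℝ)) ^ (N - 1)))
    from by rw [Finset.sum_const, nsmul_eq_mul]]
  refine Finset.sum_le_sum fun j hj => ?_
  have hjf : x j = false := by simpa using hj
  rw [if_pos (by rw [oneMax_update hjf]; linarith)]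
  calc _ ≤ _ := hstep j hj
lemma summable_S {β : ℝ} (hβ : 1 < β) : Summable (fun n : ℕ => ((n:ℝ)+1) ^ (-β)) := by
  have h1 : Summable (fun n : ℕ => ((n:ℝ)) ^ (-β)) :=
    Real.summable_nat_rpow.mpr (by linarith)
  have h2 := (summable_nat_add_iff (f := fun n : ℕ => ((n:ℝ)) ^ (-β)) 1).mpr h1
  refine h2.congr fun n => ?_
  push_cast
  rfl

lemma S_ge_one {β : ℝ} (hβ : 1 < β) : 1 ≤ ∑' n : ℕ, ((n:ℝ)+1) ^ (-β) := by
  have h0 : ((0:ℕ):ℝ) + 1 = 1 := by norm_num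
  have := Summable.le_tsum (summable_S hβ) 0 (fun j _ => by positivity)
  rw [h0, Real.one_rpow] at this
  exact this

lemma sum_Icc_le_S {β : ℝ} (hβ : 1 < β) (u : ℕ) :
    ∑ j ∈ Finset.Icc 1 u, (j : ℝ) ^ (-β) ≤ ∑' n : ℕ, ((n:ℝ)+1) ^ (-β) := by
  have hre : ∑ j ∈ Finset.Icc 1 u, (j : ℝ) ^ (-β)
      = ∑ n ∈ Finset.range u, ((n:ℝ)+1) ^ (-β) := by
    refine Finset.sum_nbij' (fun j => j - 1) (fun n => n + 1) ?_ ?_ ?_ ?_ ?_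
    · intro j hj; simp only [Finset.mem_Icc] at hj; simp [Finset.mem_range]; omega
    · intro n hn; simp only [Finset.mem_range] at hn; simp [Finset.mem_Icc]; omega
    · intro j hj
      simp only [Finset.mem_Icc] at hj
      show j - 1 + 1 = j
      omega
    · intro n hn
      show n + 1 - 1 = n
      omega
    · intro j hj
      simp only [Finset.mem_Icc] at hj
      congr 1
      push_cast [Nat.cast_sub hj.1]
      ring
  rw [hre]
  exact Summable.sum_le_tsum (Finset.range u) (fun n _ => by positivity) (summable_S hβ)

lemma powMass_one_ge {β : ℝ} (hβ : 1 < β) {u : ℕ} (hu : 1 ≤ u) :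
    ENNReal.ofReal ((∑' n : ℕ, ((n:ℝ)+1) ^ (-β))⁻¹) ≤ powMass β u 1 := by
  have h1 : (1:ℕ) ∈ Finset.Icc 1 u := Finset.mem_Icc.mpr ⟨le_refl _, hu⟩
  rw [powMass, if_pos h1]
  push_cast
  rw [Real.one_rpow, mul_one]
  apply ENNReal.ofReal_le_ofReal
  have hpos : (0:ℝ) < ∑ j ∈ Finset.Icc 1 u, (j : ℝ) ^ (-β) := by
    apply Finset.sum_pos
    · intro j hj
      have : 0 < j := (Finset.mem_Icc.mp hj).1
      have : (0:ℝ) < j := by exact_mod_cast this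
      positivity
    · exact ⟨1, h1⟩
  exact inv_anti₀ hpos (sum_Icc_le_S hβ u)

lemma exp_neg_two_le (N : ℕ) (hN : 2 ≤ N) :
    Real.exp (-2) ≤ (1 - 1/(N:ℝ)) ^ (N - 1) := by
  have hN' : (2:ℝ) ≤ N := by exact_mod_cast hN
  have hNpos : (0:ℝ) < N := by linarith
  have h1N : 1 - 1/(N:ℝ) > 0 := by
    rw [gt_iff_lt, sub_pos, div_lt_one hNpos]; linarith
  have hkey : Real.exp (-(2/(N:ℝ))) ≤ 1 - 1/(N:ℝ) := by
    have hx := Real.add_one_le_exp (2/(N:ℝ))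
    have hexp_pos : (0:ℝ) < Real.exp (2/(N:ℝ)) := Real.exp_pos _
    rw [Real.exp_neg]
    rw [inv_le_iff_one_le_mul₀ hexp_pos]
    calc (1:ℝ) ≤ (1 - 1/(N:ℝ)) * (2/(N:ℝ) + 1) := by
          rw [show (1 - 1/(N:ℝ)) * (2/(N:ℝ) + 1) = 1 + (1/(N:ℝ)) * ((N - 2)/(N:ℝ)) by
            field_simp; ring]
          have h2 : (0:ℝ) ≤ (N:ℝ) - 2 := by linarith
          have : (0:ℝ) ≤ (1/(N:ℝ)) * (((N:ℝ) - 2)/(N:ℝ)) := by positivity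
          linarith
      _ ≤ (1 - 1/(N:ℝ)) * Real.exp (2/(N:ℝ)) := by
          apply mul_le_mul_of_nonneg_left hx h1N.le
  calc Real.exp (-2) ≤ Real.exp (((N-1:ℕ):ℝ) * (-(2/(N:ℝ)))) := by
        apply Real.exp_le_exp.mpr
        rw [Nat.cast_sub (by omega)]
        push_cast
        rw [show ((N:ℝ) - 1) * (-(2/(N:ℝ))) = -(2 * ((N-1)/(N:ℝ))) by ring]
        have : ((N:ℝ)-1)/(N:ℝ) ≤ 1 := by
          rw [div_le_one hNpos]; linarith
        nlinarith
    _ = Real.exp (-(2/(N:ℝ))) ^ (N-1) := Real.exp_nat_mul _ _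
    _ ≤ (1 - 1/(N:ℝ)) ^ (N-1) := pow_le_pow_left₀ (Real.exp_pos _).le hkey _

noncomputable def zC {N : ℕ} (x : Fin N → Bool) : ℕ :=
  (Finset.univ.filter fun i => x i = false).card


lemma zC_le (x : Fin N → Bool) : zC x ≤ N := by
  unfold zC
  simpa using Finset.card_filter_le Finset.univ (fun i => x i = false)

lemma ones_add_zC (x : Fin N → Bool) :
    (Finset.univ.filter fun i => x i = true).card + zC x = N := by
  unfold zC
  have h := Finset.card_filter_add_card_filter_not
    (s := (Finset.univ : Finset (Fin N))) (p := fun i => x i = true)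
  rw [Finset.card_univ, Fintype.card_fin] at h
  have hfe : (Finset.univ.filter fun a => ¬ x a = true)
      = (Finset.univ.filter fun i => x i = false) :=
    Finset.filter_congr fun i _ => by simp [Bool.not_eq_true]
  rw [hfe] at h
  exact h

lemma oneMax_lt_iff (x y : Fin N → Bool) :
    oneMax N x < oneMax N y ↔ zC y < zC x := by
  unfold oneMax
  rw [Nat.cast_lt]
  have hx := ones_add_zC x
  have hy := ones_add_zC y
  omega

lemma zC_eq_zero_iff (x : Fin N → Bool) : zC x = 0 ↔ x = fun _ => true := by
  unfold zC
  rw [Finset.card_eq_zero, Finset.filter_eq_empty_iff]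
  constructor
  · intro h
    funext i
    have := h (Finset.mem_univ i)
    simpa [Bool.not_eq_false] using this
  · intro h i _
    rw [h]
    simp

lemma chain_step
    (step : (Fin N → Bool) → (Fin N → Bool) → ℝ≥0∞)
    (μ μ' : (Fin N → Bool) → ℝ≥0∞)
    (hμ' : ∀ y, μ' y = ∑' x, μ x * step x y)
    (hzero : ∀ x y : Fin N → Bool, zC x < zC y → step x y = 0)
    (hsum : ∀ x, ∑' y, step x y ≤ 1)
    (π : ℝ≥0∞) (d : ℕ)
    (himp : ∀ x, zC x = d → π ≤ ∑' y, (if zC y < d then step x y else 0)) :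
    ((∑' y, if zC y = d then μ' y else 0) + (∑' y, if d < zC y then μ' y else 0))
        + π * (∑' x, if zC x = d then μ x else 0)
      ≤ (∑' x, if zC x = d then μ x else 0) + (∑' x, if d < zC x then μ x else 0) := by
  classical
  have combine1 : ∀ g : (Fin N → Bool) → ℝ≥0∞,
      (∑' y, if zC y = d then g y else 0) + (∑' y, if d < zC y then g y else 0)
      = ∑' y, if d ≤ zC y then g y else 0 := by
    intro g
    rw [← ENNReal.tsum_add]
    apply tsum_congr
    intro y
    by_cases h1 : zC y = d
    · rw [if_pos h1, if_neg (by omega), if_pos (by omega), add_zero]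
    · by_cases h2 : d < zC y
      · rw [if_neg h1, if_pos h2, if_pos (le_of_lt h2), zero_add]
      · rw [if_neg h1, if_neg h2, if_neg (by omega), add_zero]
  rw [combine1 μ', combine1 μ]
  have hswap : ∑' y, (if d ≤ zC y then μ' y else 0)
      = ∑' x, μ x * ∑' y, (if d ≤ zC y then step x y else 0) := by
    calc ∑' y, (if d ≤ zC y then μ' y else 0)
        = ∑' y, ∑' x, μ x * (if d ≤ zC y then step x y else 0) := by
          apply tsum_congr
          intro y
          by_cases h : d ≤ zC y
          · rw [if_pos h, hμ' y]
            exact tsum_congr fun x => by rw [if_pos h]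
          · rw [if_neg h]
            symm
            simp [if_neg h]
      _ = ∑' x, ∑' y, μ x * (if d ≤ zC y then step x y else 0) := ENNReal.tsum_comm
      _ = ∑' x, μ x * ∑' y, (if d ≤ zC y then step x y else 0) :=
          tsum_congr fun x => ENNReal.tsum_mul_left
  rw [hswap]
  have hπA : π * (∑' x, if zC x = d then μ x else 0)
      = ∑' x, μ x * (if zC x = d then π else 0) := by
    rw [← ENNReal.tsum_mul_left]
    apply tsum_congr
    intro x
    by_cases h : zC x = d
    · rw [if_pos h, if_pos h, mul_comm]
    · rw [if_neg h, if_neg h, mul_zero, mul_zero]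
  rw [hπA, ← ENNReal.tsum_add]
  refine ENNReal.tsum_le_tsum fun x => ?_
  by_cases h1 : zC x = d
  · rw [if_pos h1, if_pos (by omega : d ≤ zC x)]
    have hs : (∑' y, if d ≤ zC y then step x y else 0) + π ≤ 1 := by
      refine le_trans (add_le_add_right (himp x h1) _) ?_
      rw [← ENNReal.tsum_add]
      calc ∑' y, ((if d ≤ zC y then step x y else 0) + (if zC y < d then step x y else 0))
          = ∑' y, step x y := by
            apply tsum_congr
            intro y
            by_cases h : d ≤ zC y
            · rw [if_pos h, if_neg (by omega), add_zero]
            · rw [if_neg h, if_pos (by omega), zero_add]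
        _ ≤ 1 := hsum x
    calc μ x * (∑' y, if d ≤ zC y then step x y else 0) + μ x * π
        = μ x * ((∑' y, if d ≤ zC y then step x y else 0) + π) := by ring
      _ ≤ μ x * 1 := mul_le_mul_right hs _
      _ = μ x := mul_one _
  · rw [if_neg h1, mul_zero, add_zero]
    by_cases h2 : d ≤ zC x
    · rw [if_pos h2]
      calc μ x * (∑' y, if d ≤ zC y then step x y else 0)
          ≤ μ x * 1 := by
            refine mul_le_mul_right (le_trans (ENNReal.tsum_le_tsum fun y => ?_) (hsum x)) _
            by_cases h : d ≤ zC y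
            · rw [if_pos h]
            · rw [if_neg h]; exact zero_le
        _ = μ x := mul_one _
    · rw [if_neg h2]
      have hz : (∑' y, if d ≤ zC y then step x y else 0) = 0 := by
        rw [ENNReal.tsum_eq_zero]
        intro y
        by_cases h : d ≤ zC y
        · rw [if_pos h]
          exact hzero x y (by omega)
        · rw [if_neg h]
      rw [hz, mul_zero]

lemma telescope (A B : ℕ → ℝ≥0∞) (π : ℝ≥0∞)
    (h0 : A 0 + B 0 ≤ 1)
    (hstep : ∀ t, (A (t+1) + B (t+1)) + π * A t ≤ A t + B t) :
    ∀ T, π * ∑ t ∈ Finset.range T, A t + (A T + B T) ≤ 1 := by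
  intro T
  induction T with
  | zero => simpa using h0
  | succ T ih =>
    rw [Finset.sum_range_succ, mul_add]
    calc π * ∑ t ∈ Finset.range T, A t + π * A T + (A (T+1) + B (T+1))
        = π * ∑ t ∈ Finset.range T, A t + ((A (T+1) + B (T+1)) + π * A T) := by ring
      _ ≤ π * ∑ t ∈ Finset.range T, A t + (A T + B T) := add_le_add_right (hstep T) _
      _ ≤ 1 := ih

lemma tsum_A_le_inv (A B : ℕ → ℝ≥0∞) (π : ℝ≥0∞)
    (h0 : A 0 + B 0 ≤ 1)
    (hstep : ∀ t, (A (t+1) + B (t+1)) + π * A t ≤ A t + B t) :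
    ∑' t, A t ≤ π⁻¹ := by
  refine Summable.tsum_le_of_sum_range_le ENNReal.summable fun T => ?_
  rw [ENNReal.le_inv_iff_mul_le, mul_comm]
  calc π * ∑ t ∈ Finset.range T, A t ≤ π * ∑ t ∈ Finset.range T, A t + (A T + B T) :=
        le_add_right le_rfl
    _ ≤ 1 := telescope A B π h0 hstep T


lemma marginal_sum_le_one (βl βp βc : ℝ) (ul up uc : ℕ) (f : (Fin N → Bool) → ℝ)
    (hN : 1 ≤ N) (hup : (up : ℝ) ≤ Real.sqrt N) (huc : (uc : ℝ) ≤ Real.sqrt N) :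
    ∀ t, ∑' x, gaMarginal N βl βp βc ul up uc f t x ≤ 1 := by
  intro t
  induction t with
  | zero =>
    show ∑' _x : Fin N → Bool, ((2:ℝ≥0∞) ^ N)⁻¹ ≤ 1
    rw [tsum_fintype, Finset.sum_const, Finset.card_univ, Fintype.card_fun,
      Fintype.card_bool, Fintype.card_fin, nsmul_eq_mul, Nat.cast_pow, Nat.cast_ofNat]
    rw [ENNReal.mul_inv_cancel (by positivity) (by simp)]
  | succ t ih =>
    show ∑' (y : Fin N → Bool) (x : Fin N → Bool),
        gaMarginal N βl βp βc ul up uc f t x * gaStep N βl βp βc ul up uc f x y ≤ 1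
    refine le_trans (level_le _ _ fun x => Or.inr ?_) ih
    exact step_sum_le_one βl βp βc ul up uc f x hN hup huc

end Lemmas

set_option maxHeartbeats 2000000 in
/-- If `βλ > 1`, `βp > 1` and `βc > 1`, then there is a constant
`C > 0` (depending only on `βλ, βp, βc`) such that for all `N ≥ 2`, `uλ ≥ 1` and
`1 ≤ up, uc ≤ √N`, the heavy-tailed `(1+(λ,λ))` GA maximizing OneMax on `{0,1}^N`
satisfies `E[T_I] ≤ C·N·ln N`, where `T_I` is the first iteration index `t ≥ 0`
at which the current solution `x_t` is the all-ones string. -/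
theorem heavyTailedGA_oneMax_runtime (βl βp βc : ℝ)
    (hβl : 1 < βl) (hβp : 1 < βp) (hβc : 1 < βc) :
    ∃ C : ℝ, 0 < C ∧ ∀ N : ℕ, 2 ≤ N → ∀ ul up uc : ℕ,
      1 ≤ ul → 1 ≤ up → (up : ℝ) ≤ Real.sqrt N → 1 ≤ uc → (uc : ℝ) ≤ Real.sqrt N →
      gaExpectedIterations N βl βp βc ul up uc (oneMax N)
          (fun x => x = fun _ => true)
        ≤ ENNReal.ofReal (C * N * Real.log N) := by
  classical
  set Sp := ∑' n : ℕ, ((n:ℝ)+1) ^ (-βp) with hSp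
  set Sc := ∑' n : ℕ, ((n:ℝ)+1) ^ (-βc) with hSc
  set Sl := ∑' n : ℕ, ((n:ℝ)+1) ^ (-βl) with hSl
  have hSp1 : 1 ≤ Sp := S_ge_one hβp
  have hSc1 : 1 ≤ Sc := S_ge_one hβc
  have hSl1 : 1 ≤ Sl := S_ge_one hβl
  have hSp0 : 0 < Sp := by linarith
  have hSc0 : 0 < Sc := by linarith
  have hSl0 : 0 < Sl := by linarith
  set K : ℝ := Real.exp (-2) / (Sp * Sc * Sl) with hK
  have hK0 : 0 < K := div_pos (Real.exp_pos _) (by positivity)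
  have hlog2 : 0 < Real.log 2 := Real.log_pos (by norm_num)
  refine ⟨(1 + (Real.log 2)⁻¹) / K, by positivity, ?_⟩
  intro N hN2 ul up uc hul hup1 hup2 huc1 huc2
  have hN1 : 1 ≤ N := by omega
  have hNposR : (0:ℝ) < N := by exact_mod_cast Nat.lt_of_lt_of_le Nat.zero_lt_one hN1
  set f := oneMax N with hf
  set stp := gaStep N βl βp βc ul up uc f with hstp
  set μ := gaMarginal N βl βp βc ul up uc f with hμ
  have h1N : (0:ℝ) ≤ 1 - 1/(N:ℝ) := by
    have : 1/(N:ℝ) ≤ 1 := by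
      rw [div_le_one hNposR]; exact_mod_cast hN1
    linarith
  -- real-number core inequality
  have hrealK : ∀ z : ℕ, K * z / N ≤
      z * ((Sp⁻¹ * Sc⁻¹ * Sl⁻¹) * ((1/(N:ℝ)) * (1 - 1/(N:ℝ))^(N-1))) := by
    intro z
    have hexp := exp_neg_two_le N hN2
    have e1 : K * z / N = (z:ℝ) * ((Sp⁻¹ * Sc⁻¹ * Sl⁻¹) * ((1/(N:ℝ)) * Real.exp (-2))) := by
      rw [hK]
      field_simp
    rw [e1]
    have hz0 : (0:ℝ) ≤ z := Nat.cast_nonneg z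
    refine mul_le_mul_of_nonneg_left ?_ hz0
    refine mul_le_mul_of_nonneg_left ?_ (by positivity)
    exact mul_le_mul_of_nonneg_left hexp (by positivity)
  -- per-state improvement bound
  have himp : ∀ x : Fin N → Bool,
      ENNReal.ofReal (K * (zC x) / N) ≤ ∑' y, (if zC y < zC x then stp x y else 0) := by
    intro x
    have hcongr : ∑' y, (if zC y < zC x then stp x y else 0)
        = ∑' y, (if f x < f y then stp x y else 0) :=
      tsum_congr fun y => if_congr (oneMax_lt_iff x y).symm rfl rfl
    rw [hcongr, hstp, hf]
    refine le_trans ?_ (improve_lower βl βp βc ul up uc hN1 x)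
    have hzc : ((Finset.univ.filter fun i => x i = false).card : ℝ≥0∞) = (zC x : ℝ≥0∞) := rfl
    rw [hzc]
    calc ENNReal.ofReal (K * (zC x) / N)
        ≤ ENNReal.ofReal ((zC x) * ((Sp⁻¹ * Sc⁻¹ * Sl⁻¹) *
            ((1/(N:ℝ)) * (1 - 1/(N:ℝ))^(N-1)))) := ENNReal.ofReal_le_ofReal (hrealK _)
      _ = (zC x : ℝ≥0∞) * ((ENNReal.ofReal Sp⁻¹ * ENNReal.ofReal Sc⁻¹ * ENNReal.ofReal Sl⁻¹) *
            ENNReal.ofReal ((1/(N:ℝ)) * (1 - 1/(N:ℝ))^(N-1))) := by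
          rw [ENNReal.ofReal_mul (by positivity), ENNReal.ofReal_mul (by positivity),
            ENNReal.ofReal_mul (by positivity), ENNReal.ofReal_mul (by positivity),
            ENNReal.ofReal_natCast]
      _ ≤ (zC x : ℝ≥0∞) * ((powMass βp up 1 * powMass βc uc 1 * powMass βl ul 1) *
            ENNReal.ofReal ((1/(N:ℝ)) * (1 - 1/(N:ℝ))^(N-1))) := by
          refine mul_le_mul_right (mul_le_mul' (mul_le_mul' (mul_le_mul'
            (powMass_one_ge hβp hup1) (powMass_one_ge hβc huc1))
            (powMass_one_ge hβl hul)) le_rfl) _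
  have hmass := marginal_sum_le_one βl βp βc ul up uc f hN1 hup2 huc2
  have hzero : ∀ x y : Fin N → Bool, zC x < zC y → stp x y = 0 := by
    intro x y h
    exact step_eq_zero_of_lt βl βp βc ul up uc f ((oneMax_lt_iff y x).mpr h)
  have hstepsum : ∀ x, ∑' y, stp x y ≤ 1 :=
    fun x => step_sum_le_one βl βp βc ul up uc f x hN1 hup2 huc2
  -- per-level time bound
  have hSd : ∀ d : ℕ, 1 ≤ d →
      ∑' t, (∑' x, if zC x = d then μ t x else 0) ≤ (ENNReal.ofReal (K * d / N))⁻¹ := by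
    intro d hd
    refine tsum_A_le_inv _ (fun t => ∑' x, if d < zC x then μ t x else 0) _ ?_ ?_
    · calc (∑' x, if zC x = d then μ 0 x else 0) + (∑' x, if d < zC x then μ 0 x else 0)
          = ∑' x, ((if zC x = d then μ 0 x else 0) + (if d < zC x then μ 0 x else 0)) :=
            (ENNReal.tsum_add).symm
        _ ≤ ∑' x, μ 0 x := by
            refine ENNReal.tsum_le_tsum fun x => ?_
            by_cases h1 : zC x = d
            · rw [if_pos h1, if_neg (by omega), add_zero]
            · rw [if_neg h1]
              by_cases h2 : d < zC x
              · rw [if_pos h2, zero_add]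
              · rw [if_neg h2, add_zero]; exact zero_le
        _ ≤ 1 := hmass 0
    · intro t
      refine chain_step stp (μ t) (μ (t+1)) (fun y => rfl) hzero hstepsum _ d
        (fun x hx => ?_)
      have h := himp x
      rw [hx] at h
      exact h
  -- rewrite the expected iteration count
  have hEr : gaExpectedIterations N βl βp βc ul up uc f (fun x => x = fun _ => true)
      = ∑ d ∈ Finset.Icc 1 N, ∑' t, (∑' x, if zC x = d then μ t x else 0) := by
    have key : ∀ (t : ℕ) (x : Fin N → Bool),
        (if x = (fun _ => true) then (0:ℝ≥0∞) else μ t x)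
          = ∑ d ∈ Finset.Icc 1 N, (if zC x = d then μ t x else 0) := by
      intro t x
      by_cases h : x = fun _ => true
      · rw [if_pos h]
        symm
        refine Finset.sum_eq_zero fun d hd => if_neg ?_
        have h0 : zC x = 0 := (zC_eq_zero_iff x).mpr h
        have hd1 := (Finset.mem_Icc.mp hd).1
        omega
      · rw [if_neg h, Finset.sum_ite_eq (Finset.Icc 1 N) (zC x) (fun _ => μ t x), if_pos]
        simp only [Finset.mem_Icc]
        have h0 : zC x ≠ 0 := fun hc => h ((zC_eq_zero_iff x).mp hc)
        have := zC_le x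
        omega
    calc gaExpectedIterations N βl βp βc ul up uc f (fun x => x = fun _ => true)
        = ∑' t, ∑' x : Fin N → Bool,
            ∑ d ∈ Finset.Icc 1 N, (if zC x = d then μ t x else 0) := by
          unfold gaExpectedIterations
          refine tsum_congr fun t => tsum_congr fun x => ?_
          by_cases h : x = fun _ => true
          · rw [if_pos h, ← key t x, if_pos h]
          · rw [if_neg h, ← key t x, if_neg h]
      _ = ∑' t, ∑ d ∈ Finset.Icc 1 N, ∑' x : Fin N → Bool,
            (if zC x = d then μ t x else 0) :=
          tsum_congr fun t => Summable.tsum_finsetSum fun _ _ => ENNReal.summable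
      _ = ∑ d ∈ Finset.Icc 1 N, ∑' t, ∑' x : Fin N → Bool,
            (if zC x = d then μ t x else 0) := Summable.tsum_finsetSum fun _ _ => ENNReal.summable
  rw [hEr]
  -- final numeric estimate
  have hfinal : ∑ d ∈ Finset.Icc 1 N, (K * d / N)⁻¹
      ≤ ((1 + (Real.log 2)⁻¹) / K) * N * Real.log N := by
    have hharm : ∑ d ∈ Finset.Icc 1 N, ((d:ℝ))⁻¹ = ((harmonic N : ℚ) : ℝ) := by
      rw [harmonic_eq_sum_Icc]
      push_cast
      rfl
    have hsum1 : ∑ d ∈ Finset.Icc 1 N, (K * d / N)⁻¹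
        = ((N:ℝ) / K) * ∑ d ∈ Finset.Icc 1 N, ((d:ℝ))⁻¹ := by
      rw [Finset.mul_sum]
      refine Finset.sum_congr rfl fun d hd => ?_
      have hd1 : 1 ≤ d := (Finset.mem_Icc.mp hd).1
      have hd0 : (0:ℝ) < d := by exact_mod_cast hd1
      field_simp
    have hlogN : Real.log 2 ≤ Real.log N :=
      Real.log_le_log (by norm_num) (by exact_mod_cast hN2)
    have hlogNpos : 0 < Real.log N := lt_of_lt_of_le hlog2 hlogN
    have h1log : 1 + Real.log N ≤ (1 + (Real.log 2)⁻¹) * Real.log N := by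
      have h2 : 1 ≤ (Real.log 2)⁻¹ * Real.log N := by
        calc (1:ℝ) = Real.log 2 / Real.log 2 := by field_simp
          _ ≤ Real.log N / Real.log 2 := by gcongr
          _ = (Real.log 2)⁻¹ * Real.log N := by ring
      nlinarith
    calc ∑ d ∈ Finset.Icc 1 N, (K * d / N)⁻¹
        = ((N:ℝ) / K) * ((harmonic N : ℚ) : ℝ) := by rw [hsum1, hharm]
      _ ≤ ((N:ℝ) / K) * (1 + Real.log N) := by
          refine mul_le_mul_of_nonneg_left ?_ (by positivity)
          exact_mod_cast harmonic_le_one_add_log N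
      _ ≤ ((N:ℝ) / K) * ((1 + (Real.log 2)⁻¹) * Real.log N) :=
          mul_le_mul_of_nonneg_left h1log (by positivity)
      _ = ((1 + (Real.log 2)⁻¹) / K) * N * Real.log N := by ring
  calc ∑ d ∈ Finset.Icc 1 N, ∑' t, (∑' x, if zC x = d then μ t x else 0)
      ≤ ∑ d ∈ Finset.Icc 1 N, (ENNReal.ofReal (K * d / N))⁻¹ :=
        Finset.sum_le_sum fun d hd => hSd d (Finset.mem_Icc.mp hd).1
    _ = ∑ d ∈ Finset.Icc 1 N, ENNReal.ofReal ((K * d / N)⁻¹) := by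
        refine Finset.sum_congr rfl fun d hd => ?_
        have hd1 : 1 ≤ d := (Finset.mem_Icc.mp hd).1
        have hd0 : (0:ℝ) < d := by exact_mod_cast hd1
        rw [ENNReal.ofReal_inv_of_pos (by positivity)]
    _ = ENNReal.ofReal (∑ d ∈ Finset.Icc 1 N, (K * d / N)⁻¹) :=
        (ENNReal.ofReal_sum_of_nonneg fun d hd => by positivity).symm
    _ ≤ ENNReal.ofReal (((1 + (Real.log 2)⁻¹) / K) * N * Real.log N) :=
        ENNReal.ofReal_le_ofReal hfinal
end
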